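/- arXiv:1301.1205 — 4 statements merged into one kernel-verified Lean document; each statement's English description precedes it below -/
import Mathlib

section
/- The map sending a permutation π ∈ Sₙ and an involution s ∈ Sₙ (s² = e) to (-1)^{i(π,s)} · v_{πsπ⁻¹}, where i(π,s) is the number of pairs (i,j) with 1 ≤ i < j ≤ n, s(i) = j and π(i) > π(j), defines a linear action of Sₙ on the free complex vector space with basis indexed by the involutions of Sₙ; that is, π·(σ·v_s) = (πσ)·v_s for all π, σ ∈ Sₙ and all involutions s. -/
open scoped Classical
open Relation
noncomputable section

/-- Vertices of a diagram: `inl` = unprimed points `n̄`, `inr` = primed points `n̄'`. -/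
abbrev DVert (n : ℕ) := Fin n ⊕ Fin n

/-- Tripled vertex set used for gluing: bottom (unprimed of the right factor),
middle (identified vertices), top (primed of the left factor). -/
abbrev TVert (n : ℕ) := Fin n ⊕ (Fin n ⊕ Fin n)

def embBot (n : ℕ) : DVert n → TVert n := Sum.elim Sum.inl (fun i => Sum.inr (Sum.inl i))
def embTop (n : ℕ) : DVert n → TVert n :=
  Sum.elim (fun i => Sum.inr (Sum.inl i)) (fun i => Sum.inr (Sum.inr i))
def embOut (n : ℕ) : DVert n → TVert n := Sum.elim Sum.inl (fun i => Sum.inr (Sum.inr i))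

/-- The minimal equivalence relation `χ` on the tripled vertex set containing
(the embedded copies of) `τ` and `ρ`. -/
def glue (n : ℕ) (τ ρ : Setoid (DVert n)) : Setoid (TVert n) :=
  EqvGen.setoid (fun x y =>
    (∃ a b, ρ.r a b ∧ x = embBot n a ∧ y = embBot n b) ∨
    (∃ a b, τ.r a b ∧ x = embTop n a ∧ y = embTop n b))

/-- Composition `τ ∘ ρ` in the partition monoid: glue and restrict to the outer vertices. -/
def pcomp (n : ℕ) (τ ρ : Setoid (DVert n)) : Setoid (DVert n) where
  r x y := (glue n τ ρ).r (embOut n x) (embOut n y)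
  iseqv := ⟨fun _ => (glue n τ ρ).iseqv.refl _, fun h => (glue n τ ρ).iseqv.symm h,
    fun h₁ h₂ => (glue n τ ρ).iseqv.trans h₁ h₂⟩

/-- A middle vertex of the tripled vertex set. -/
def isMiddle {n : ℕ} (x : TVert n) : Prop := ∃ i, x = Sum.inr (Sum.inl i)

/-- `c(τ,ρ)`: the number of classes of the glued relation contained in the middle row. -/
def ccount (n : ℕ) (τ ρ : Setoid (DVert n)) : ℕ :=
  {C ∈ (glue n τ ρ).classes | ∀ x ∈ C, isMiddle x}.ncard

/-- A propagating part: one meeting both the unprimed and the primed vertices. -/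
def IsPropagating {n : ℕ} (C : Set (DVert n)) : Prop :=
  (∃ i, Sum.inl i ∈ C) ∧ (∃ i, Sum.inr i ∈ C)

/-- The rank `r(σ)`: the number of propagating parts of `σ`. -/
def prank (n : ℕ) (σ : Setoid (DVert n)) : ℕ :=
  {C ∈ σ.classes | IsPropagating C}.ncard

/-- The anti-involution `⋆` swapping primed and unprimed vertices. -/
def pstar (n : ℕ) (σ : Setoid (DVert n)) : Setoid (DVert n) where
  r x y := σ.r x.swap y.swap
  iseqv := ⟨fun _ => σ.iseqv.refl _, fun h => σ.iseqv.symm h,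
    fun h₁ h₂ => σ.iseqv.trans h₁ h₂⟩

/-- Minimal unprimed vertex of a part. -/
def minL {n : ℕ} (C : Set (DVert n)) : ℕ :=
  sInf {m : ℕ | ∃ j : Fin n, (j : ℕ) = m ∧ Sum.inl j ∈ C}

/-- Minimal primed vertex of a part. -/
def minR {n : ℕ} (C : Set (DVert n)) : ℕ :=
  sInf {m : ℕ | ∃ j : Fin n, (j : ℕ) = m ∧ Sum.inr j ∈ C}

/-- Position of a propagating part `C` of `σ` in the ordering (by minimal elements) of the
intersections of the propagating parts with the unprimed vertices. -/
def posL (n : ℕ) (σ : Setoid (DVert n)) (C : Set (DVert n)) : ℕ :=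
  {D ∈ σ.classes | IsPropagating D ∧ minL D < minL C}.ncard

/-- Position of a propagating part `C` of `σ` in the ordering (by minimal elements) of the
intersections of the propagating parts with the primed vertices. -/
def posR (n : ℕ) (σ : Setoid (DVert n)) (C : Set (DVert n)) : ℕ :=
  {D ∈ σ.classes | IsPropagating D ∧ minR D < minR C}.ncard

/-- The permutation `π_σ ∈ S_k` recording how propagating lines connect the two sides of `σ`
(for a diagram of rank `k`): the unique permutation sending the position of a propagating part
on the unprimed side to its position on the primed side. -/
def permAt (n k : ℕ) (σ : Setoid (DVert n)) : Equiv.Perm (Fin k) :=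
  Classical.epsilon (fun π : Equiv.Perm (Fin k) =>
    ∀ C ∈ σ.classes, IsPropagating C → ∀ h : posL n σ C < k,
      ((π ⟨posL n σ C, h⟩ : Fin k) : ℕ) = posR n σ C)

/-- The product of the partition algebra `𝐏ₙ(δ)` on the free vector space on diagrams. -/
def pmul (n : ℕ) (δ : ℂ) (f g : Setoid (DVert n) →₀ ℂ) : Setoid (DVert n) →₀ ℂ :=
  f.sum fun τ a => g.sum fun ρ b =>
    Finsupp.single (pcomp n τ ρ) (δ ^ ccount n τ ρ * (a * b))

/-- `i(π,s)`: the number of pairs `i < j` with `s i = j` and `π i > π j`. -/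
def icount (n : ℕ) (π s : Equiv.Perm (Fin n)) : ℕ :=
  (Finset.univ.filter fun p : Fin n × Fin n => p.1 < p.2 ∧ s p.1 = p.2 ∧ π p.2 < π p.1).card


/-- The set of involutions in `Sₙ` (elements with `s² = e`). -/
def Invol (n : ℕ) := {s : Equiv.Perm (Fin n) // s * s = 1}

/-- Conjugation of an involution by a permutation. -/
def conjInvol (n : ℕ) (π : Equiv.Perm (Fin n)) (s : Invol n) : Invol n :=
  ⟨π * s.1 * π⁻¹, by
    have h := s.2
    have e : π * s.1 * π⁻¹ * (π * s.1 * π⁻¹) = π * (s.1 * s.1) * π⁻¹ := by group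
    rw [e, h]; group⟩

/-- The action of `π ∈ Sₙ` on the free vector space `ℂ[ℐₙ]`, sending
`v_s` to `(-1)^{i(π,s)} v_{πsπ⁻¹}` (extended linearly). -/
def modelAct (n : ℕ) (π : Equiv.Perm (Fin n)) (f : Invol n →₀ ℂ) : Invol n →₀ ℂ :=
  f.sum fun s c => Finsupp.single (conjInvol n π s) ((-1 : ℂ) ^ icount n π s.1 * c)

lemma invol_apply_apply {n : ℕ} {s : Equiv.Perm (Fin n)} (hs : s * s = 1) (i : Fin n) :
    s (s i) = i := by
  have := congrArg (fun t : Equiv.Perm (Fin n) => t i) hs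
  simpa using this

lemma icount_eq (n : ℕ) (π s : Equiv.Perm (Fin n)) :
    icount n π s = (Finset.univ.filter fun i : Fin n => i < s i ∧ π (s i) < π i).card := by
  unfold icount
  refine Finset.card_nbij' (fun p => p.1) (fun i => (i, s i)) ?_ ?_ ?_ ?_
  · rintro ⟨a, b⟩ hp
    rw [Finset.mem_coe, Finset.mem_filter] at hp ⊢
    obtain ⟨_, h1, h2, h3⟩ := hp
    simp only [] at h1 h2 h3
    refine ⟨Finset.mem_univ _, ?_, ?_⟩ <;> simp [h2, h1, h3]
  · intro i hi
    rw [Finset.mem_coe, Finset.mem_filter] at hi ⊢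
    exact ⟨Finset.mem_univ _, hi.2.1, rfl, hi.2.2⟩
  · rintro ⟨a, b⟩ hp
    rw [Finset.mem_coe, Finset.mem_filter] at hp
    simp [hp.2.2.1]
  · intro i _; rfl

lemma icount_conj (n : ℕ) (π σ s : Equiv.Perm (Fin n)) (hs : s * s = 1) :
    icount n π (σ * s * σ⁻¹) =
      (Finset.univ.filter fun i : Fin n =>
        i < s i ∧ ¬((σ i < σ (s i)) ↔ (π (σ i) < π (σ (s i))))).card := by
  have hss : ∀ i, s (s i) = i := invol_apply_apply hs
  have hs' : ∀ x, (σ * s * σ⁻¹) x = σ (s (σ⁻¹ x)) := by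
    intro x; simp [Equiv.Perm.mul_apply]
  rw [icount_eq]
  refine Finset.card_nbij'
    (fun x => if σ⁻¹ x < s (σ⁻¹ x) then σ⁻¹ x else s (σ⁻¹ x))
    (fun i => if σ i < σ (s i) then σ i else σ (s i)) ?_ ?_ ?_ ?_
  · intro x hx
    rw [Finset.mem_coe, Finset.mem_filter] at hx ⊢
    obtain ⟨-, h1, h2⟩ := hx
    rw [hs'] at h1 h2
    beta_reduce
    set i0 := σ⁻¹ x with hi0
    have hx0 : σ i0 = x := σ.apply_symm_apply x
    refine ⟨Finset.mem_univ _, ?_⟩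
    by_cases hb : i0 < s i0
    · rw [if_pos hb]
      refine ⟨hb, fun hiff => ?_⟩
      have hA : σ i0 < σ (s i0) := by rw [hx0]; exact h1
      have hB := hiff.mp hA
      rw [hx0] at hB
      exact absurd h2 (not_lt.mpr hB.le)
    · have hne : s i0 ≠ i0 := by
        intro h; rw [h, hx0] at h1; exact lt_irrefl _ h1
      have hlt : s i0 < i0 := lt_of_le_of_ne (not_lt.mp hb) hne
      rw [if_neg hb]
      refine ⟨by rw [hss]; exact hlt, ?_⟩
      rw [hss]
      intro hiff
      have hB : π (σ (s i0)) < π (σ i0) := by rw [hx0]; exact h2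
      have hA := hiff.mpr hB
      rw [hx0] at hA
      exact absurd h1 (not_lt.mpr hA.le)
  · intro i hi
    rw [Finset.mem_coe, Finset.mem_filter] at hi ⊢
    obtain ⟨-, h1, h2⟩ := hi
    beta_reduce
    have hne : i ≠ s i := ne_of_lt h1
    have hσne : σ i ≠ σ (s i) := fun h => hne (σ.injective h)
    have hπne : π (σ i) ≠ π (σ (s i)) := fun h => hσne (π.injective h)
    refine ⟨Finset.mem_univ _, ?_⟩
    by_cases hb : σ i < σ (s i)
    · rw [if_pos hb, hs', show ∀ x, σ⁻¹ (σ x) = x from σ.symm_apply_apply]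
      have hc : ¬ π (σ i) < π (σ (s i)) := fun hc => h2 (iff_of_true hb hc)
      exact ⟨hb, lt_of_le_of_ne (not_lt.mp hc) hπne.symm⟩
    · have hb' : σ (s i) < σ i := lt_of_le_of_ne (not_lt.mp hb) hσne.symm
      have hc : π (σ i) < π (σ (s i)) := by
        by_contra hc
        exact h2 (iff_of_false hb (fun h => hc h))
      rw [if_neg hb, hs', show ∀ x, σ⁻¹ (σ x) = x from σ.symm_apply_apply, hss]
      exact ⟨hb', hc⟩
  · intro x hx
    rw [Finset.mem_coe, Finset.mem_filter] at hx
    obtain ⟨-, h1, -⟩ := hx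
    rw [hs'] at h1
    have hx0 : σ (σ⁻¹ x) = x := σ.apply_symm_apply x
    beta_reduce
    by_cases hb : σ⁻¹ x < s (σ⁻¹ x)
    · rw [if_pos hb, if_pos (by rw [hx0]; exact h1)]
      exact hx0
    · rw [if_neg hb, hss, if_neg (by rw [hx0]; exact not_lt.mpr h1.le)]
      exact hx0
  · intro i hi
    rw [Finset.mem_coe, Finset.mem_filter] at hi
    obtain ⟨-, h1, -⟩ := hi
    beta_reduce
    by_cases hb : σ i < σ (s i)
    · rw [if_pos hb, show ∀ x, σ⁻¹ (σ x) = x from σ.symm_apply_apply, if_pos h1]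
    · rw [if_neg hb, show ∀ x, σ⁻¹ (σ x) = x from σ.symm_apply_apply, hss, if_neg (not_lt.mpr h1.le)]

lemma sign_key (n : ℕ) (π σ s : Equiv.Perm (Fin n)) (hs : s * s = 1) :
    (-1 : ℂ) ^ icount n π (σ * s * σ⁻¹) * (-1 : ℂ) ^ icount n σ s
      = (-1 : ℂ) ^ icount n (π * σ) s := by
  rw [← pow_add]
  have key : ((icount n π (σ * s * σ⁻¹) + icount n σ s : ℕ) : ZMod 2)
      = ((icount n (π * σ) s : ℕ) : ZMod 2) := by
    rw [icount_conj n π σ s hs, icount_eq n σ s, icount_eq n (π * σ) s]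
    simp only [Equiv.Perm.mul_apply]
    rw [Nat.cast_add]
    simp only [Finset.card_filter]
    erw [Finset.card_filter]
    push_cast
    rw [← Finset.sum_add_distrib]
    refine Finset.sum_congr rfl fun i _ => ?_
    by_cases h1 : i < s i
    · have hne : i ≠ s i := ne_of_lt h1
      have hσ : σ i ≠ σ (s i) := fun h => hne (σ.injective h)
      have hπ : π (σ i) ≠ π (σ (s i)) := fun h => hσ (π.injective h)
      by_cases hb : σ i < σ (s i) <;> by_cases hc : π (σ i) < π (σ (s i))
      · have hP : ¬ π (σ (s i)) < π (σ i) := not_lt.mpr hc.le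
        have hQ : ¬ σ (s i) < σ i := not_lt.mpr hb.le
        simp [h1, hP, hQ, hb, hc]
      · have hP : π (σ (s i)) < π (σ i) := lt_of_le_of_ne (not_lt.mp hc) hπ.symm
        have hQ : ¬ σ (s i) < σ i := not_lt.mpr hb.le
        simp [h1, hP, hQ, hb, hc]
      · have hP : ¬ π (σ (s i)) < π (σ i) := not_lt.mpr hc.le
        have hQ : σ (s i) < σ i := lt_of_le_of_ne (not_lt.mp hb) hσ.symm
        simp only [h1, hP, hQ, hb, hc, true_and, if_true, if_false, iff_true, not_false_iff,
          iff_false, not_true, if_neg, if_pos]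
        decide
      · have hP : π (σ (s i)) < π (σ i) := lt_of_le_of_ne (not_lt.mp hc) hπ.symm
        have hQ : σ (s i) < σ i := lt_of_le_of_ne (not_lt.mp hb) hσ.symm
        simp [h1, hP, hQ, hb, hc]
    · simp [h1]
  have h2 : (icount n π (σ * s * σ⁻¹) + icount n σ s) % 2 = icount n (π * σ) s % 2 :=
    (ZMod.natCast_eq_natCast_iff _ _ _).mp key
  rcases Nat.even_or_odd (icount n (π * σ) s) with h | h
  · rw [h.neg_one_pow, (Nat.even_iff.mpr (by rw [h2]; exact Nat.even_iff.mp h)).neg_one_pow]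
  · rw [h.neg_one_pow, (Nat.odd_iff.mpr (by rw [h2]; exact Nat.odd_iff.mp h)).neg_one_pow]

/-- the formula `π · v_s = (-1)^{i(π,s)} v_{πsπ⁻¹}` defines an action:
`π · (σ · v_s) = (πσ) · v_s` for all `π, σ ∈ Sₙ` and all involutions `s`. -/
theorem gelfand_model_action (n : ℕ) (π σ : Equiv.Perm (Fin n)) (s : Invol n) :
    modelAct n π (modelAct n σ (Finsupp.single s 1)) =
      modelAct n (π * σ) (Finsupp.single s 1) := by
  unfold modelAct
  rw [Finsupp.sum_single_index (by simp), Finsupp.sum_single_index (by simp),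
      Finsupp.sum_single_index (by simp)]
  have hc : conjInvol n π (conjInvol n σ s) = conjInvol n (π * σ) s := by
    apply Subtype.ext
    show π * (σ * s.1 * σ⁻¹) * π⁻¹ = (π * σ) * s.1 * (π * σ)⁻¹
    group
  rw [hc]
  congr 1
  show (-1 : ℂ) ^ icount n π (σ * s.1 * σ⁻¹) * ((-1 : ℂ) ^ icount n σ s.1 * 1)
      = (-1 : ℂ) ^ icount n (π * σ) s.1 * 1
  rw [mul_one, mul_one, sign_key n π σ s.1 s.2]

end
end

section
/- For all π, σ ∈ Sₙ and every involution s ∈ Sₙ, the sign counts satisfy i(πσ, s) ≡ i(π, σ s σ⁻¹) + i(σ, s) (mod 2), where i(π,s) is the number of pairs 1 ≤ i < j ≤ n with s(i) = j and π(i) > π(j). -/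
open scoped Classical
open Relation
noncomputable section

/-- the sign counts satisfy
`i(πσ, s) ≡ i(π, σsσ⁻¹) + i(σ, s) (mod 2)` for all `π, σ ∈ Sₙ` and involutions `s`. -/
theorem icount_cocycle (n : ℕ) (π σ s : Equiv.Perm (Fin n)) (hs : s * s = 1) :
    icount n (π * σ) s ≡ icount n π (σ * s * σ⁻¹) + icount n σ s [MOD 2] := by
  classical
  have hsinv : ∀ x, s (s x) = x := fun x => by
    have := DFunLike.congr_fun hs x
    simpa [Equiv.Perm.mul_apply] using this
  have key : ∀ (ρ t : Equiv.Perm (Fin n)), (icount n ρ t : ZMod 2) =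
      ∑ p ∈ Finset.univ.filter (fun p : Fin n × Fin n => p.1 < p.2 ∧ t p.1 = p.2),
        (if ρ p.2 < ρ p.1 then (1 : ZMod 2) else 0) := by
    intro ρ t
    have hset : (Finset.univ.filter fun p : Fin n × Fin n =>
        p.1 < p.2 ∧ t p.1 = p.2 ∧ ρ p.2 < ρ p.1) =
        ((Finset.univ.filter fun p : Fin n × Fin n => p.1 < p.2 ∧ t p.1 = p.2).filter
          fun p => ρ p.2 < ρ p.1) := by
      rw [Finset.filter_filter]
      ext p
      simp only [Finset.mem_filter, Finset.mem_univ, true_and]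
      tauto
    rw [Finset.sum_boole, icount, hset]
  apply (ZMod.natCast_eq_natCast_iff _ _ 2).mp
  push_cast
  rw [key (π * σ) s, key π (σ * s * σ⁻¹), key σ s]
  have hbij : ∑ q ∈ Finset.univ.filter
        (fun p : Fin n × Fin n => p.1 < p.2 ∧ (σ * s * σ⁻¹) p.1 = p.2),
        (if π q.2 < π q.1 then (1 : ZMod 2) else 0)
      = ∑ p ∈ Finset.univ.filter (fun p : Fin n × Fin n => p.1 < p.2 ∧ s p.1 = p.2),
        (if σ p.1 < σ p.2 then (if π (σ p.2) < π (σ p.1) then (1 : ZMod 2) else 0)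
          else (if π (σ p.1) < π (σ p.2) then (1 : ZMod 2) else 0)) := by
    refine Finset.sum_nbij'
      (i := fun q : Fin n × Fin n =>
        if σ⁻¹ q.1 < σ⁻¹ q.2 then (σ⁻¹ q.1, σ⁻¹ q.2) else (σ⁻¹ q.2, σ⁻¹ q.1))
      (j := fun p : Fin n × Fin n =>
        if σ p.1 < σ p.2 then (σ p.1, σ p.2) else (σ p.2, σ p.1))
      ?_ ?_ ?_ ?_ ?_
    · intro q hq
      simp only [Finset.mem_filter, Finset.mem_univ, true_and] at hq ⊢
      simp only [Equiv.Perm.mul_apply] at hq ⊢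
      obtain ⟨hlt, heq⟩ := hq
      have h1 : s (σ⁻¹ q.1) = σ⁻¹ q.2 := by
        have := congrArg (fun x => σ⁻¹ x) heq
        simpa using this
      have hne : σ⁻¹ q.1 ≠ σ⁻¹ q.2 := fun h => (ne_of_lt hlt) (σ⁻¹.injective h)
      by_cases hc : σ⁻¹ q.1 < σ⁻¹ q.2
      · simp only [Equiv.Perm.inv_def] at hc h1; simp [hc, h1]
      · have hlt2 : σ⁻¹ q.2 < σ⁻¹ q.1 := lt_of_le_of_ne (not_lt.mp hc) (Ne.symm hne)
        have h2 : s (σ⁻¹ q.2) = σ⁻¹ q.1 := by rw [← h1, hsinv]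
        simp only [Equiv.Perm.inv_def] at hc hlt2 h2; simp [hc, hlt2, h2]
    · intro p hp
      simp only [Finset.mem_filter, Finset.mem_univ, true_and] at hp ⊢
      simp only [Equiv.Perm.mul_apply] at hp ⊢
      obtain ⟨hlt, heq⟩ := hp
      have hne : σ p.1 ≠ σ p.2 := fun h => absurd (σ.injective h) (ne_of_lt hlt)
      by_cases hc : σ p.1 < σ p.2
      · simp [hc, heq]
      · have hlt2 : σ p.2 < σ p.1 := lt_of_le_of_ne (not_lt.mp hc) (Ne.symm hne)
        have h2 : s p.2 = p.1 := by rw [← heq, hsinv]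
        simp [hc, hlt2, h2]
    · intro q hq
      simp only [Finset.mem_filter, Finset.mem_univ, true_and] at hq
      obtain ⟨hlt, _⟩ := hq
      by_cases hc : σ⁻¹ q.1 < σ⁻¹ q.2
      · simp [Equiv.Perm.inv_def] at hc; simp [hc, hlt]
      · simp [Equiv.Perm.inv_def] at hc; simp [not_lt.mpr hc, not_lt.mpr (le_of_lt hlt)]
    · intro p hp
      simp only [Finset.mem_filter, Finset.mem_univ, true_and] at hp
      obtain ⟨hlt, _⟩ := hp
      by_cases hc : σ p.1 < σ p.2
      · simp [hc, hlt]
      · simp [hc, not_lt.mpr (le_of_lt hlt)]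
    · intro q hq
      simp only [Finset.mem_filter, Finset.mem_univ, true_and] at hq
      obtain ⟨hlt, _⟩ := hq
      by_cases hc : σ⁻¹ q.1 < σ⁻¹ q.2
      · simp [Equiv.Perm.inv_def] at hc; simp [hc, hlt]
      · simp [Equiv.Perm.inv_def] at hc; simp [not_lt.mpr hc, hlt, not_lt.mpr (le_of_lt hlt)]
  rw [hbij, ← Finset.sum_add_distrib]
  apply Finset.sum_congr rfl
  intro p hp
  simp only [Finset.mem_filter, Finset.mem_univ, true_and] at hp
  obtain ⟨hlt, _⟩ := hp
  have hne : π (σ p.1) ≠ π (σ p.2) := fun h =>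
    absurd (σ.injective (π.injective h)) (ne_of_lt hlt)
  by_cases hc : σ p.1 < σ p.2
  · simp only [Equiv.Perm.mul_apply, hc, if_true, not_lt.mpr (le_of_lt hc), if_false, add_zero]
    rfl
  · have hlt2 : σ p.2 < σ p.1 := lt_of_le_of_ne (not_lt.mp hc) (fun h =>
      absurd (σ.injective h.symm) (ne_of_lt hlt))
    simp only [Equiv.Perm.mul_apply, hc, if_false, hlt2, if_true]
    by_cases hd : π (σ p.2) < π (σ p.1)
    · simp [hd, not_lt.mpr (le_of_lt hd)]
    · have : π (σ p.1) < π (σ p.2) := lt_of_le_of_ne (not_lt.mp hd) hne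
      simp [hd, this]
      decide

end
end

section
/- The composition operation ∘ on the set Pₙ of equivalence relations (partitions) of the 2n-element set n̄ ∪ n̄' is associative: (τ ∘ ρ) ∘ σ = τ ∘ (ρ ∘ σ) for all τ, ρ, σ ∈ Pₙ. -/
open scoped Classical
open Relation
noncomputable section

section AssocAux

/-- Quadrupled vertex set: four levels 0,1,2,3. -/
abbrev QVert (n : ℕ) := Fin n ⊕ (Fin n ⊕ (Fin n ⊕ Fin n))

def q0 {n : ℕ} (j : Fin n) : QVert n := Sum.inl j
def q1 {n : ℕ} (j : Fin n) : QVert n := Sum.inr (Sum.inl j)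
def q2 {n : ℕ} (j : Fin n) : QVert n := Sum.inr (Sum.inr (Sum.inl j))
def q3 {n : ℕ} (j : Fin n) : QVert n := Sum.inr (Sum.inr (Sum.inr j))

def fL (n : ℕ) : TVert n → QVert n := Sum.elim q0 (Sum.elim q1 q3)
def gL (n : ℕ) : TVert n → QVert n := Sum.elim q1 (Sum.elim q2 q3)
def fR (n : ℕ) : TVert n → QVert n := Sum.elim q0 (Sum.elim q2 q3)
def gR (n : ℕ) : TVert n → QVert n := Sum.elim q0 (Sum.elim q1 q2)

def eS (n : ℕ) : DVert n → QVert n := Sum.elim q0 q1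
def eR (n : ℕ) : DVert n → QVert n := Sum.elim q1 q2
def eT (n : ℕ) : DVert n → QVert n := Sum.elim q2 q3
def oOut (n : ℕ) : DVert n → QVert n := Sum.elim q0 q3

/-- The glued relation of all three diagrams on the quadrupled vertex set. -/
def Qrel (n : ℕ) (τ ρ σ : Setoid (DVert n)) (x y : QVert n) : Prop :=
  (∃ a b, σ.r a b ∧ x = eS n a ∧ y = eS n b) ∨
  (∃ a b, ρ.r a b ∧ x = eR n a ∧ y = eR n b) ∨
  (∃ a b, τ.r a b ∧ x = eT n a ∧ y = eT n b)

section RLemma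

variable {V A B : Type*} (f : A → V) (g : B → V) (E : Setoid A) (G : Setoid B)

def EpR (x y : V) : Prop := x = y ∨ ∃ a a', f a = x ∧ f a' = y ∧ E.r a a'
def GpR (x y : V) : Prop := x = y ∨ ∃ b b', g b = x ∧ g b' = y ∧ G.r b b'
def RrelR (x y : V) : Prop := ∃ m m', GpR g G x m ∧ EpR f E m m' ∧ GpR g G m' y

lemma EpR_symm {x y : V} (h : EpR f E x y) : EpR f E y x := by
  rcases h with rfl | ⟨a, a', h1, h2, h3⟩
  · exact Or.inl rfl
  · exact Or.inr ⟨a', a, h2, h1, E.iseqv.symm h3⟩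

lemma GpR_symm {x y : V} (h : GpR g G x y) : GpR g G y x := by
  rcases h with rfl | ⟨a, a', h1, h2, h3⟩
  · exact Or.inl rfl
  · exact Or.inr ⟨a', a, h2, h1, G.iseqv.symm h3⟩

lemma EpR_trans (hf : Function.Injective f) {x y z : V}
    (h1 : EpR f E x y) (h2 : EpR f E y z) : EpR f E x z := by
  rcases h1 with rfl | ⟨a, a', ha, ha', hE⟩
  · exact h2
  · rcases h2 with rfl | ⟨b, b', hb, hb', hE'⟩
    · exact Or.inr ⟨a, a', ha, ha', hE⟩
    · have : a' = b := hf (ha'.trans hb.symm)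
      subst this
      exact Or.inr ⟨a, b', ha, hb', E.iseqv.trans hE hE'⟩

lemma GpR_trans (hg : Function.Injective g) {x y z : V}
    (h1 : GpR g G x y) (h2 : GpR g G y z) : GpR g G x z := by
  rcases h1 with rfl | ⟨a, a', ha, ha', hG⟩
  · exact h2
  · rcases h2 with rfl | ⟨b, b', hb, hb', hG'⟩
    · exact Or.inr ⟨a, a', ha, ha', hG⟩
    · have : a' = b := hg (ha'.trans hb.symm)
      subst this
      exact Or.inr ⟨a, b', ha, hb', G.iseqv.trans hG hG'⟩

lemma RrelR_refl (x : V) : RrelR f g E G x x :=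
  ⟨x, x, Or.inl rfl, Or.inl rfl, Or.inl rfl⟩

lemma RrelR_symm {x y : V} (h : RrelR f g E G x y) : RrelR f g E G y x := by
  obtain ⟨m, m', h1, h2, h3⟩ := h
  exact ⟨m', m, GpR_symm g G h3, EpR_symm f E h2, GpR_symm g G h1⟩

lemma RrelR_trans (hf : Function.Injective f) (hg : Function.Injective g)
    (H1 : ∀ b b' a a', g b = f a → g b' = f a' → G.r b b' → E.r a a')
    {x y z : V} (r1 : RrelR f g E G x y) (r2 : RrelR f g E G y z) :
    RrelR f g E G x z := by
  obtain ⟨m1, m2, gp1, ep1, gp2⟩ := r1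
  obtain ⟨m3, m4, gp3, ep2, gp4⟩ := r2
  have gmid : GpR g G m2 m3 := GpR_trans g G hg gp2 gp3
  rcases gmid with rfl | ⟨b, b', hb, hb', hG⟩
  · exact ⟨m1, m4, gp1, EpR_trans f E hf ep1 ep2, gp4⟩
  · rcases ep1 with rfl | ⟨a, a', ha, ha', hE⟩
    · -- m1 = m2 : merge the middle G step into the left Gp
      exact ⟨m3, m4, GpR_trans g G hg gp1 (Or.inr ⟨b, b', hb, hb', hG⟩), ep2, gp4⟩
    · rcases ep2 with rfl | ⟨a2, a2', ha2, ha2', hE2⟩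
      · -- m3 = m4 : merge the middle G step into the right Gp
        exact ⟨m1, m2, gp1, Or.inr ⟨a, a', ha, ha', hE⟩,
          GpR_trans g G hg (Or.inr ⟨b, b', hb, hb', hG⟩) gp4⟩
      · -- collapse the middle G step using H1
        have hmid : E.r a' a2 := H1 b b' a' a2 (hb.trans ha'.symm) (hb'.trans ha2.symm) hG
        exact ⟨m1, m4, gp1,
          Or.inr ⟨a, a2', ha, ha2', E.iseqv.trans hE (E.iseqv.trans hmid hE2)⟩, gp4⟩

lemma RrelR_extract (hf : Function.Injective f)
    (H1 : ∀ b b' a a', g b = f a → g b' = f a' → G.r b b' → E.r a a')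
    (hg : Function.Injective g)
    {a a' : A} (r : RrelR f g E G (f a) (f a')) : E.r a a' := by
  obtain ⟨m, m', gp1, ep, gp2⟩ := r
  rcases gp1 with rfl | ⟨b, b', hb, hb', hG⟩
  · rcases ep with rfl | ⟨a1, a1', ha1, ha1', hE⟩
    · rcases gp2 with heq | ⟨b2, b2', hb2, hb2', hG2⟩
      · have : a = a' := hf heq
        subst this; exact E.iseqv.refl a
      · exact H1 b2 b2' a a' hb2 hb2' hG2
    · have : a1 = a := hf ha1
      subst this
      rcases gp2 with rfl | ⟨b2, b2', hb2, hb2', hG2⟩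
      · have : a1' = a' := hf ha1'
        subst this; exact hE
      · have : E.r a1' a' := H1 b2 b2' a1' a' (hb2.trans ha1'.symm) hb2' hG2
        exact E.iseqv.trans hE this
  · -- left Gp is a genuine G step ending at g b' = m
    rcases ep with rfl | ⟨a1, a1', ha1, ha1', hE⟩
    · rcases gp2 with rfl | ⟨b2, b2', hb2, hb2', hG2⟩
      · exact H1 b b' a a' hb hb' hG
      · have : b' = b2 := hg (hb'.trans hb2.symm)
        subst this
        exact H1 b b2' a a' hb hb2' (G.iseqv.trans hG hG2)
    · have hfirst : E.r a a1 := H1 b b' a a1 hb (hb'.trans ha1.symm) hG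
      rcases gp2 with rfl | ⟨b2, b2', hb2, hb2', hG2⟩
      · have : a1' = a' := hf ha1'
        subst this
        exact E.iseqv.trans hfirst hE
      · have hlast : E.r a1' a' := H1 b2 b2' a1' a' (hb2.trans ha1'.symm) hb2' hG2
        exact E.iseqv.trans hfirst (E.iseqv.trans hE hlast)

lemma eqvGen_to_RrelR (hf : Function.Injective f) (hg : Function.Injective g)
    (H1 : ∀ b b' a a', g b = f a → g b' = f a' → G.r b b' → E.r a a')
    (Q : V → V → Prop) (hQ : ∀ x y, Q x y → RrelR f g E G x y) :
    ∀ x y, Relation.EqvGen Q x y → RrelR f g E G x y := by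
  intro x y hxy
  induction hxy with
  | rel a b hab => exact hQ a b hab
  | refl a => exact RrelR_refl f g E G a
  | symm a b _ ih => exact RrelR_symm f g E G ih
  | trans a b c _ _ ih1 ih2 => exact RrelR_trans f g E G hf hg H1 ih1 ih2

end RLemma

lemma eqvGen_map' {α β : Type*} (m : α → β) (r : α → α → Prop) (Q : β → β → Prop)
    (hr : ∀ x y, r x y → Relation.EqvGen Q (m x) (m y)) :
    ∀ x y, Relation.EqvGen r x y → Relation.EqvGen Q (m x) (m y) := by
  intro x y hxy
  induction hxy with
  | rel a b hab => exact hr a b hab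
  | refl a => exact Relation.EqvGen.refl _
  | symm a b _ ih => exact Relation.EqvGen.symm _ _ ih
  | trans a b c _ _ ih1 ih2 => exact Relation.EqvGen.trans _ _ _ ih1 ih2

end AssocAux
section AssocInst

variable {n : ℕ}

lemma fL_inj (n : ℕ) : Function.Injective (fL n) := by
  rintro (j | j | j) (k | k | k) hx <;>
    simp only [fL, q0, q1, q2, q3, Sum.elim_inl, Sum.elim_inr, Sum.inl.injEq, Sum.inr.injEq,
      reduceCtorEq] at hx <;> simp [hx]

lemma gL_inj (n : ℕ) : Function.Injective (gL n) := by
  rintro (j | j | j) (k | k | k) hx <;>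
    simp only [gL, q0, q1, q2, q3, Sum.elim_inl, Sum.elim_inr, Sum.inl.injEq, Sum.inr.injEq,
      reduceCtorEq] at hx <;> simp [hx]

lemma fR_inj (n : ℕ) : Function.Injective (fR n) := by
  rintro (j | j | j) (k | k | k) hx <;>
    simp only [fR, q0, q1, q2, q3, Sum.elim_inl, Sum.elim_inr, Sum.inl.injEq, Sum.inr.injEq,
      reduceCtorEq] at hx <;> simp [hx]

lemma gR_inj (n : ℕ) : Function.Injective (gR n) := by
  rintro (j | j | j) (k | k | k) hx <;>
    simp only [gR, q0, q1, q2, q3, Sum.elim_inl, Sum.elim_inr, Sum.inl.injEq, Sum.inr.injEq,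
      reduceCtorEq] at hx <;> simp [hx]

lemma sharedL (n : ℕ) : ∀ b a : TVert n, gL n b = fL n a →
    ∃ d : DVert n, b = embOut n d ∧ a = embTop n d := by
  rintro (j | j | j) (k | k | k) hx <;>
    simp only [gL, fL, q0, q1, q2, q3, Sum.elim_inl, Sum.elim_inr, Sum.inl.injEq,
      Sum.inr.injEq, reduceCtorEq] at hx
  · subst hx; exact ⟨Sum.inl j, rfl, rfl⟩
  · subst hx; exact ⟨Sum.inr j, rfl, rfl⟩

lemma sharedR (n : ℕ) : ∀ b a : TVert n, gR n b = fR n a →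
    ∃ d : DVert n, b = embOut n d ∧ a = embBot n d := by
  rintro (j | j | j) (k | k | k) hx <;>
    simp only [gR, fR, q0, q1, q2, q3, Sum.elim_inl, Sum.elim_inr, Sum.inl.injEq,
      Sum.inr.injEq, reduceCtorEq] at hx
  · subst hx; exact ⟨Sum.inl j, rfl, rfl⟩
  · subst hx; exact ⟨Sum.inr j, rfl, rfl⟩

-- pointwise compatibilities
lemma fL_embBot (d : DVert n) : fL n (embBot n d) = eS n d := by cases d <;> rfl
lemma fL_embTop (d : DVert n) : fL n (embTop n d) = gL n (embOut n d) := by cases d <;> rfl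
lemma gL_embBot (d : DVert n) : gL n (embBot n d) = eR n d := by cases d <;> rfl
lemma gL_embTop (d : DVert n) : gL n (embTop n d) = eT n d := by cases d <;> rfl
lemma fL_embOut (d : DVert n) : fL n (embOut n d) = oOut n d := by cases d <;> rfl
lemma fR_embTop (d : DVert n) : fR n (embTop n d) = eT n d := by cases d <;> rfl
lemma fR_embBot (d : DVert n) : fR n (embBot n d) = gR n (embOut n d) := by cases d <;> rfl
lemma gR_embBot (d : DVert n) : gR n (embBot n d) = eS n d := by cases d <;> rfl
lemma gR_embTop (d : DVert n) : gR n (embTop n d) = eR n d := by cases d <;> rfl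
lemma fR_embOut (d : DVert n) : fR n (embOut n d) = oOut n d := by cases d <;> rfl

lemma H1L (n : ℕ) (τ ρ σ : Setoid (DVert n)) :
    ∀ b b' a a' : TVert n, gL n b = fL n a → gL n b' = fL n a' →
      (glue n τ ρ).r b b' → (glue n (pcomp n τ ρ) σ).r a a' := by
  intro b b' a a' hb hb' hG
  obtain ⟨d, rfl, rfl⟩ := sharedL n b a hb
  obtain ⟨d', rfl, rfl⟩ := sharedL n b' a' hb'
  exact Relation.EqvGen.rel _ _ (Or.inr ⟨d, d', hG, rfl, rfl⟩)

lemma H1R (n : ℕ) (τ ρ σ : Setoid (DVert n)) :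
    ∀ b b' a a' : TVert n, gR n b = fR n a → gR n b' = fR n a' →
      (glue n ρ σ).r b b' → (glue n τ (pcomp n ρ σ)).r a a' := by
  intro b b' a a' hb hb' hG
  obtain ⟨d, rfl, rfl⟩ := sharedR n b a hb
  obtain ⟨d', rfl, rfl⟩ := sharedR n b' a' hb'
  exact Relation.EqvGen.rel _ _ (Or.inl ⟨d, d', hG, rfl, rfl⟩)

lemma left_iff (n : ℕ) (τ ρ σ : Setoid (DVert n)) (x y : DVert n) :
    (pcomp n (pcomp n τ ρ) σ).r x y ↔
      Relation.EqvGen (Qrel n τ ρ σ) (oOut n x) (oOut n y) := by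
  constructor
  · intro hxy
    have hmain : ∀ u v : TVert n, (glue n (pcomp n τ ρ) σ).r u v →
        Relation.EqvGen (Qrel n τ ρ σ) (fL n u) (fL n v) := by
      apply eqvGen_map'
      rintro u v (⟨a, b, hab, rfl, rfl⟩ | ⟨a, b, hab, rfl, rfl⟩)
      · exact Relation.EqvGen.rel _ _
          (Or.inl ⟨a, b, hab, (fL_embBot a).symm ▸ (fL_embBot a), fL_embBot b⟩)
      · -- hab : (pcomp n τ ρ).r a b, i.e. glue relation between out vertices
        rw [fL_embTop a, fL_embTop b]
        have hsub : ∀ u v : TVert n, (glue n τ ρ).r u v →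
            Relation.EqvGen (Qrel n τ ρ σ) (gL n u) (gL n v) := by
          apply eqvGen_map'
          rintro u v (⟨c, d, hcd, rfl, rfl⟩ | ⟨c, d, hcd, rfl, rfl⟩)
          · exact Relation.EqvGen.rel _ _
              (Or.inr (Or.inl ⟨c, d, hcd, gL_embBot c, gL_embBot d⟩))
          · exact Relation.EqvGen.rel _ _
              (Or.inr (Or.inr ⟨c, d, hcd, gL_embTop c, gL_embTop d⟩))
        exact hsub _ _ hab
    have := hmain _ _ hxy
    rwa [fL_embOut, fL_embOut] at this
  · intro hxy
    have hQ : ∀ u v : QVert n, Qrel n τ ρ σ u v →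
        RrelR (fL n) (gL n) (glue n (pcomp n τ ρ) σ) (glue n τ ρ) u v := by
      rintro u v (⟨a, b, hab, rfl, rfl⟩ | ⟨a, b, hab, rfl, rfl⟩ | ⟨a, b, hab, rfl, rfl⟩)
      · exact ⟨eS n a, eS n b, Or.inl rfl,
          Or.inr ⟨embBot n a, embBot n b, fL_embBot a, fL_embBot b,
            Relation.EqvGen.rel _ _ (Or.inl ⟨a, b, hab, rfl, rfl⟩)⟩, Or.inl rfl⟩
      · exact ⟨eR n b, eR n b, Or.inr ⟨embBot n a, embBot n b, gL_embBot a, gL_embBot b,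
            Relation.EqvGen.rel _ _ (Or.inl ⟨a, b, hab, rfl, rfl⟩)⟩, Or.inl rfl, Or.inl rfl⟩
      · exact ⟨eT n b, eT n b, Or.inr ⟨embTop n a, embTop n b, gL_embTop a, gL_embTop b,
            Relation.EqvGen.rel _ _ (Or.inr ⟨a, b, hab, rfl, rfl⟩)⟩, Or.inl rfl, Or.inl rfl⟩
    have hR := eqvGen_to_RrelR (fL n) (gL n) (glue n (pcomp n τ ρ) σ) (glue n τ ρ)
      (fL_inj n) (gL_inj n) (H1L n τ ρ σ) _ hQ _ _ hxy
    rw [← fL_embOut x, ← fL_embOut y] at hR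
    exact RrelR_extract (fL n) (gL n) _ _ (fL_inj n) (H1L n τ ρ σ) (gL_inj n) hR

lemma right_iff (n : ℕ) (τ ρ σ : Setoid (DVert n)) (x y : DVert n) :
    (pcomp n τ (pcomp n ρ σ)).r x y ↔
      Relation.EqvGen (Qrel n τ ρ σ) (oOut n x) (oOut n y) := by
  constructor
  · intro hxy
    have hmain : ∀ u v : TVert n, (glue n τ (pcomp n ρ σ)).r u v →
        Relation.EqvGen (Qrel n τ ρ σ) (fR n u) (fR n v) := by
      apply eqvGen_map'
      rintro u v (⟨a, b, hab, rfl, rfl⟩ | ⟨a, b, hab, rfl, rfl⟩)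
      · -- hab : (pcomp n ρ σ).r a b
        rw [fR_embBot a, fR_embBot b]
        have hsub : ∀ u v : TVert n, (glue n ρ σ).r u v →
            Relation.EqvGen (Qrel n τ ρ σ) (gR n u) (gR n v) := by
          apply eqvGen_map'
          rintro u v (⟨c, d, hcd, rfl, rfl⟩ | ⟨c, d, hcd, rfl, rfl⟩)
          · exact Relation.EqvGen.rel _ _
              (Or.inl ⟨c, d, hcd, gR_embBot c, gR_embBot d⟩)
          · exact Relation.EqvGen.rel _ _
              (Or.inr (Or.inl ⟨c, d, hcd, gR_embTop c, gR_embTop d⟩))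
        exact hsub _ _ hab
      · exact Relation.EqvGen.rel _ _
          (Or.inr (Or.inr ⟨a, b, hab, fR_embTop a, fR_embTop b⟩))
    have := hmain _ _ hxy
    rwa [fR_embOut, fR_embOut] at this
  · intro hxy
    have hQ : ∀ u v : QVert n, Qrel n τ ρ σ u v →
        RrelR (fR n) (gR n) (glue n τ (pcomp n ρ σ)) (glue n ρ σ) u v := by
      rintro u v (⟨a, b, hab, rfl, rfl⟩ | ⟨a, b, hab, rfl, rfl⟩ | ⟨a, b, hab, rfl, rfl⟩)
      · exact ⟨eS n b, eS n b, Or.inr ⟨embBot n a, embBot n b, gR_embBot a, gR_embBot b,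
            Relation.EqvGen.rel _ _ (Or.inl ⟨a, b, hab, rfl, rfl⟩)⟩, Or.inl rfl, Or.inl rfl⟩
      · exact ⟨eR n b, eR n b, Or.inr ⟨embTop n a, embTop n b, gR_embTop a, gR_embTop b,
            Relation.EqvGen.rel _ _ (Or.inr ⟨a, b, hab, rfl, rfl⟩)⟩, Or.inl rfl, Or.inl rfl⟩
      · exact ⟨eT n a, eT n b, Or.inl rfl,
          Or.inr ⟨embTop n a, embTop n b, fR_embTop a, fR_embTop b,
            Relation.EqvGen.rel _ _ (Or.inr ⟨a, b, hab, rfl, rfl⟩)⟩, Or.inl rfl⟩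
    have hR := eqvGen_to_RrelR (fR n) (gR n) (glue n τ (pcomp n ρ σ)) (glue n ρ σ)
      (fR_inj n) (gR_inj n) (H1R n τ ρ σ) _ hQ _ _ hxy
    rw [← fR_embOut x, ← fR_embOut y] at hR
    exact RrelR_extract (fR n) (gR n) _ _ (fR_inj n) (H1R n τ ρ σ) (gR_inj n) hR

end AssocInst


/-- the composition of the partition monoid `Pₙ` is associative. -/
theorem pcomp_assoc (n : ℕ) (τ ρ σ : Setoid (DVert n)) :
    pcomp n (pcomp n τ ρ) σ = pcomp n τ (pcomp n ρ σ) := by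
  apply Setoid.ext
  intro x y
  exact (left_iff n τ ρ σ x y).trans (right_iff n τ ρ σ x y).symm

end
end

section
/- If ι ∈ Pₙ is ⋆-self-dual and τ ∈ Pₙ satisfies r(τ ∘ ι) = r(ι), then the conjugate τ ∘ ι ∘ τ⋆ is again ⋆-self-dual and has rank r(ι). -/
open scoped Classical
open Relation
noncomputable section

namespace ConjAux

/-- Four-row vertex set: row0 = τ⋆ unprimed, row1 = τ⋆ primed = ι unprimed,
row2 = ι primed = τ unprimed, row3 = τ primed. -/
abbrev QV (n : ℕ) := Fin n ⊕ (Fin n ⊕ (Fin n ⊕ Fin n))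

abbrev qv0 {n : ℕ} (i : Fin n) : QV n := Sum.inl i
abbrev qv1 {n : ℕ} (i : Fin n) : QV n := Sum.inr (Sum.inl i)
abbrev qv2 {n : ℕ} (i : Fin n) : QV n := Sum.inr (Sum.inr (Sum.inl i))
abbrev qv3 {n : ℕ} (i : Fin n) : QV n := Sum.inr (Sum.inr (Sum.inr i))

def e01 {n : ℕ} : DVert n → QV n := Sum.elim qv0 qv1
def e12 {n : ℕ} : DVert n → QV n := Sum.elim qv1 qv2
def e23 {n : ℕ} : DVert n → QV n := Sum.elim qv2 qv3
def oQ {n : ℕ} : DVert n → QV n := Sum.elim qv0 qv3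
def uQ {n : ℕ} : DVert n → QV n := Sum.elim qv1 qv3

@[simp] lemma e01_inl {n : ℕ} (i : Fin n) : e01 (Sum.inl i : DVert n) = qv0 i := rfl
@[simp] lemma e01_inr {n : ℕ} (i : Fin n) : e01 (Sum.inr i : DVert n) = qv1 i := rfl
@[simp] lemma e12_inl {n : ℕ} (i : Fin n) : e12 (Sum.inl i : DVert n) = qv1 i := rfl
@[simp] lemma e12_inr {n : ℕ} (i : Fin n) : e12 (Sum.inr i : DVert n) = qv2 i := rfl
@[simp] lemma e23_inl {n : ℕ} (i : Fin n) : e23 (Sum.inl i : DVert n) = qv2 i := rfl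
@[simp] lemma e23_inr {n : ℕ} (i : Fin n) : e23 (Sum.inr i : DVert n) = qv3 i := rfl
@[simp] lemma oQ_inl {n : ℕ} (i : Fin n) : oQ (Sum.inl i : DVert n) = qv0 i := rfl
@[simp] lemma oQ_inr {n : ℕ} (i : Fin n) : oQ (Sum.inr i : DVert n) = qv3 i := rfl
@[simp] lemma uQ_inl {n : ℕ} (i : Fin n) : uQ (Sum.inl i : DVert n) = qv1 i := rfl
@[simp] lemma uQ_inr {n : ℕ} (i : Fin n) : uQ (Sum.inr i : DVert n) = qv3 i := rfl

def edg {n : ℕ} (σ : Setoid (DVert n)) (e : DVert n → QV n) (x y : QV n) : Prop :=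
  ∃ a b, σ.r a b ∧ x = e a ∧ y = e b

variable (n : ℕ) (τ ι : Setoid (DVert n))

def UpR (x y : QV n) : Prop := edg ι e12 x y ∨ edg τ e23 x y
def DownR (x y : QV n) : Prop := edg (pstar n τ) e01 x y ∨ edg ι e12 x y
def FlatR (x y : QV n) : Prop := edg (pstar n τ) e01 x y ∨ edg ι e12 x y ∨ edg τ e23 x y

def UpS : Setoid (QV n) := EqvGen.setoid (UpR n τ ι)
def DownS : Setoid (QV n) := EqvGen.setoid (DownR n τ ι)
def FlatS : Setoid (QV n) := EqvGen.setoid (FlatR n τ ι)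

/-- Map an equivalence-closure chain through a function. -/
lemma eqvgen_map {α β : Type*} {r : α → α → Prop} (S : Setoid β) (f : α → β)
    (h : ∀ x y, r x y → S.r (f x) (f y)) :
    ∀ {x y}, EqvGen r x y → S.r (f x) (f y) := by
  intro x y hxy
  induction hxy with
  | rel a b h' => exact h a b h'
  | refl a => exact S.iseqv.refl _
  | symm a b _ ih => exact S.iseqv.symm ih
  | trans a b c _ _ ih1 ih2 => exact S.iseqv.trans ih1 ih2

lemma eqvgen_le' {α : Type*} {r : α → α → Prop} (S : Setoid α)
    (h : ∀ x y, r x y → S.r x y) : ∀ {x y}, EqvGen r x y → S.r x y :=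
  eqvgen_map S id h

/-- Invariance of a set along an equivalence-closure chain. -/
lemma eqvgen_inv {α : Type*} {r : α → α → Prop} (T : Set α)
    (h : ∀ x y, r x y → (x ∈ T ↔ y ∈ T)) :
    ∀ {x y}, EqvGen r x y → (x ∈ T ↔ y ∈ T) := by
  intro x y hxy
  induction hxy with
  | rel a b h' => exact h a b h'
  | refl a => exact Iff.rfl
  | symm a b _ ih => exact ih.symm
  | trans a b c _ _ ih1 ih2 => exact ih1.trans ih2

/-- Crossing lemma: a chain between points of different sides must meet a "target". -/
lemma eqvgen_cross {α : Type*} {r : α → α → Prop} (side : α → Bool) (T : α → Prop)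
    (hgen : ∀ p q, r p q → side p = side q ∨ T p ∨ T q) :
    ∀ {p q}, EqvGen r p q → side p ≠ side q → ∃ t, T t ∧ EqvGen r p t := by
  have key : ∀ {p q}, EqvGen r p q →
      (EqvGen r p q ∧ (side p = side q ∨ ∃ t, T t ∧ EqvGen r p t)) := by
    intro p q h
    induction h with
    | rel a b h' =>
      refine ⟨EqvGen.rel _ _ h', ?_⟩
      rcases hgen a b h' with hs | hT | hT
      · exact Or.inl hs
      · exact Or.inr ⟨a, hT, EqvGen.refl a⟩
      · exact Or.inr ⟨b, hT, EqvGen.rel _ _ h'⟩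
    | refl a => exact ⟨EqvGen.refl a, Or.inl rfl⟩
    | symm a b hab ih =>
      refine ⟨EqvGen.symm _ _ ih.1, ?_⟩
      rcases ih.2 with hs | ⟨t, hT, ht⟩
      · exact Or.inl hs.symm
      · exact Or.inr ⟨t, hT, EqvGen.trans _ _ _ (EqvGen.symm _ _ ih.1) ht⟩
    | trans a b c hab hbc ih1 ih2 =>
      refine ⟨EqvGen.trans _ _ _ ih1.1 ih2.1, ?_⟩
      rcases ih1.2 with hs1 | ⟨t, hT, ht⟩
      · rcases ih2.2 with hs2 | ⟨t, hT, ht⟩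
        · exact Or.inl (hs1.trans hs2)
        · exact Or.inr ⟨t, hT, EqvGen.trans _ _ _ ih1.1 ht⟩
      · exact Or.inr ⟨t, hT, ht⟩
  intro p q h hne
  exact ((key h).2).resolve_left hne

section ClassHelpers

variable {α : Type*}

lemma class_rel {S : Setoid α} {P : Set α} (hP : P ∈ S.classes) {x y : α}
    (hx : x ∈ P) (hy : y ∈ P) : S.r x y := by
  obtain ⟨z, rfl⟩ := hP
  exact S.iseqv.trans hx (S.iseqv.symm hy)

lemma class_mem {S : Setoid α} {P : Set α} (hP : P ∈ S.classes) {x y : α}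
    (hx : x ∈ P) (h : S.r y x) : y ∈ P := by
  obtain ⟨z, rfl⟩ := hP
  exact S.iseqv.trans h hx

end ClassHelpers

section Transport

variable {n : ℕ} (τ ι : Setoid (DVert n))

def h3 : TVert n → QV n := Sum.elim qv1 (Sum.elim qv2 qv3)
def ret3 : QV n → TVert n :=
  Sum.elim (fun i => Sum.inl i) (Sum.elim (fun i => Sum.inl i)
    (Sum.elim (fun j => Sum.inr (Sum.inl j)) fun k => Sum.inr (Sum.inr k)))

lemma h3_embBot (a : DVert n) : h3 (embBot n a) = e12 a := by cases a <;> rfl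
lemma h3_embTop (a : DVert n) : h3 (embTop n a) = e23 a := by cases a <;> rfl
lemma h3_embOut (a : DVert n) : h3 (embOut n a) = uQ a := by cases a <;> rfl
lemma ret3_h3 (x : TVert n) : ret3 (h3 x) = x := by rcases x with i | (j | k) <;> rfl
lemma ret3_e12 (a : DVert n) : ret3 (e12 a) = embBot n a := by cases a <;> rfl
lemma ret3_e23 (a : DVert n) : ret3 (e23 a) = embTop n a := by cases a <;> rfl

lemma glue_iff_up {x y : TVert n} :
    (glue n τ ι).r x y ↔ (UpS n τ ι).r (h3 x) (h3 y) := by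
  constructor
  · intro h
    refine eqvgen_map (UpS n τ ι) h3 ?_ h
    rintro x y (⟨a, b, hab, rfl, rfl⟩ | ⟨a, b, hab, rfl, rfl⟩)
    · exact EqvGen.rel _ _ (Or.inl ⟨a, b, hab, h3_embBot a, h3_embBot b⟩)
    · exact EqvGen.rel _ _ (Or.inr ⟨a, b, hab, h3_embTop a, h3_embTop b⟩)
  · intro h
    have h2 := eqvgen_map (glue n τ ι) ret3 ?_ h
    · rwa [ret3_h3, ret3_h3] at h2
    rintro x y (⟨a, b, hab, rfl, rfl⟩ | ⟨a, b, hab, rfl, rfl⟩)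
    · exact EqvGen.rel _ _ (Or.inl ⟨a, b, hab, ret3_e12 a, ret3_e12 b⟩)
    · exact EqvGen.rel _ _ (Or.inr ⟨a, b, hab, ret3_e23 a, ret3_e23 b⟩)

lemma pcomp_iff_up {x y : DVert n} :
    (pcomp n τ ι).r x y ↔ (UpS n τ ι).r (uQ x) (uQ y) := by
  have h := glue_iff_up τ ι (x := embOut n x) (y := embOut n y)
  rw [h3_embOut, h3_embOut] at h
  exact h

lemma up_le_flat {p q : QV n} : (UpS n τ ι).r p q → (FlatS n τ ι).r p q :=
  eqvgen_le' (FlatS n τ ι) (fun x y h => EqvGen.rel _ _ (Or.inr h))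

lemma down_le_flat {p q : QV n} : (DownS n τ ι).r p q → (FlatS n τ ι).r p q :=
  eqvgen_le' (FlatS n τ ι) (fun x y h => EqvGen.rel _ _ (h.imp id Or.inl))

def gOut : TVert n → QV n := Sum.elim qv0 (Sum.elim qv1 qv3)

lemma gOut_embBot (a : DVert n) : gOut (embBot n a) = e01 a := by cases a <;> rfl
lemma gOut_embTop (a : DVert n) : gOut (embTop n a) = uQ a := by cases a <;> rfl
lemma gOut_embOut (a : DVert n) : gOut (embOut n a) = oQ a := by cases a <;> rfl

lemma sigma_to_flat {x y : TVert n} :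
    (glue n (pcomp n τ ι) (pstar n τ)).r x y → (FlatS n τ ι).r (gOut x) (gOut y) := by
  intro h
  refine eqvgen_map _ gOut ?_ h
  rintro x y (⟨a, b, hab, rfl, rfl⟩ | ⟨a, b, hab, rfl, rfl⟩)
  · rw [gOut_embBot, gOut_embBot]
    exact EqvGen.rel _ _ (Or.inl ⟨a, b, hab, rfl, rfl⟩)
  · rw [gOut_embTop, gOut_embTop]
    exact up_le_flat τ ι ((pcomp_iff_up τ ι).mp hab)

def flipQ : QV n → QV n := Sum.elim qv3 (Sum.elim qv2 (Sum.elim qv1 qv0))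

lemma flipQ_e01 (a : DVert n) : flipQ (e01 a) = e23 a.swap := by cases a <;> rfl
lemma flipQ_e12 (a : DVert n) : flipQ (e12 a) = e12 a.swap := by cases a <;> rfl
lemma flipQ_e23 (a : DVert n) : flipQ (e23 a) = e01 a.swap := by cases a <;> rfl
lemma flipQ_oQ (a : DVert n) : flipQ (oQ a) = oQ a.swap := by cases a <;> rfl
lemma flipQ_flipQ (x : QV n) : flipQ (flipQ x) = x := by
  rcases x with i | (j | (k | l)) <;> rfl

lemma iota_swap (hι : pstar n ι = ι) (a b : DVert n) :
    ι.r a.swap b.swap ↔ ι.r a b := by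
  conv_rhs => rw [← hι]
  exact Iff.rfl

lemma pstar_r_swap {σ : Setoid (DVert n)} {a b : DVert n} (h : σ.r a b) :
    (pstar n σ).r a.swap b.swap := by
  show σ.r a.swap.swap b.swap.swap
  rwa [Sum.swap_swap, Sum.swap_swap]

lemma flat_flip (hι : pstar n ι = ι) {p q : QV n} :
    (FlatS n τ ι).r p q ↔ (FlatS n τ ι).r (flipQ p) (flipQ q) := by
  have mp : ∀ p q : QV n, (FlatS n τ ι).r p q → (FlatS n τ ι).r (flipQ p) (flipQ q) := by
    intro p q h
    refine eqvgen_map _ flipQ ?_ h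
    rintro x y (⟨a, b, hab, rfl, rfl⟩ | ⟨a, b, hab, rfl, rfl⟩ | ⟨a, b, hab, rfl, rfl⟩)
    · rw [flipQ_e01, flipQ_e01]
      exact EqvGen.rel _ _ (Or.inr (Or.inr ⟨a.swap, b.swap, hab, rfl, rfl⟩))
    · rw [flipQ_e12, flipQ_e12]
      exact EqvGen.rel _ _ (Or.inr (Or.inl
        ⟨a.swap, b.swap, (iota_swap ι hι a b).mpr hab, rfl, rfl⟩))
    · rw [flipQ_e23, flipQ_e23]
      exact EqvGen.rel _ _ (Or.inl ⟨a.swap, b.swap, pstar_r_swap hab, rfl, rfl⟩)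
  refine ⟨mp p q, fun h => ?_⟩
  have h2 := mp _ _ h
  rwa [flipQ_flipQ, flipQ_flipQ] at h2

lemma down_iff_up (hι : pstar n ι = ι) {p q : QV n} :
    (DownS n τ ι).r p q ↔ (UpS n τ ι).r (flipQ p) (flipQ q) := by
  constructor
  · intro h
    refine eqvgen_map _ flipQ ?_ h
    rintro x y (⟨a, b, hab, rfl, rfl⟩ | ⟨a, b, hab, rfl, rfl⟩)
    · rw [flipQ_e01, flipQ_e01]
      exact EqvGen.rel _ _ (Or.inr ⟨a.swap, b.swap, hab, rfl, rfl⟩)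
    · rw [flipQ_e12, flipQ_e12]
      exact EqvGen.rel _ _ (Or.inl
        ⟨a.swap, b.swap, (iota_swap ι hι a b).mpr hab, rfl, rfl⟩)
  · intro h
    have h2 := eqvgen_map (DownS n τ ι) flipQ ?_ h
    · rwa [flipQ_flipQ, flipQ_flipQ] at h2
    rintro x y (⟨a, b, hab, rfl, rfl⟩ | ⟨a, b, hab, rfl, rfl⟩)
    · rw [flipQ_e12, flipQ_e12]
      exact EqvGen.rel _ _ (Or.inr
        ⟨a.swap, b.swap, (iota_swap ι hι a b).mpr hab, rfl, rfl⟩)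
    · rw [flipQ_e23, flipQ_e23]
      exact EqvGen.rel _ _ (Or.inl ⟨a.swap, b.swap, pstar_r_swap hab, rfl, rfl⟩)

end Transport
section Assoc

variable {n : ℕ} (τ ι : Setoid (DVert n))

/-- The outer glue used in `(τ∘ι)∘τ⋆`. -/
def GOS : Setoid (TVert n) := glue n (pcomp n τ ι) (pstar n τ)

/-- Linking a 4-row vertex to outer-glue vertices. -/
def linkK (p : QV n) (t : TVert n) : Prop :=
  match p with
  | Sum.inl i => t = Sum.inl i
  | Sum.inr (Sum.inl i) => t = Sum.inr (Sum.inl i)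
  | Sum.inr (Sum.inr (Sum.inl j)) =>
      ∃ z : DVert n, t = embTop n z ∧ (glue n τ ι).r (Sum.inr (Sum.inl j)) (embOut n z)
  | Sum.inr (Sum.inr (Sum.inr k)) => t = Sum.inr (Sum.inr k)

lemma linkK_unique {p : QV n} {t t' : TVert n} (h1 : linkK τ ι p t) (h2 : linkK τ ι p t') :
    (GOS τ ι).r t t' := by
  rcases p with i | (i | (j | k))
  · obtain rfl : t = Sum.inl i := h1
    obtain rfl : t' = Sum.inl i := h2
    exact (GOS τ ι).iseqv.refl _
  · obtain rfl : t = Sum.inr (Sum.inl i) := h1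
    obtain rfl : t' = Sum.inr (Sum.inl i) := h2
    exact (GOS τ ι).iseqv.refl _
  · obtain ⟨z, rfl, hz⟩ := h1
    obtain ⟨z', rfl, hz'⟩ := h2
    have hp : (pcomp n τ ι).r z z' := (glue n τ ι).iseqv.trans ((glue n τ ι).iseqv.symm hz) hz'
    exact EqvGen.rel _ _ (Or.inr ⟨z, z', hp, rfl, rfl⟩)
  · obtain rfl : t = Sum.inr (Sum.inr k) := h1
    obtain rfl : t' = Sum.inr (Sum.inr k) := h2
    exact (GOS τ ι).iseqv.refl _

/-- The auxiliary equivalence on the 4-row set used to prove associativity. -/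
def KS : Setoid (QV n) where
  r p q := (∃ t t', linkK τ ι p t ∧ linkK τ ι q t' ∧ (GOS τ ι).r t t') ∨
    (∃ j j', p = qv2 j ∧ q = qv2 j' ∧
      (glue n τ ι).r (Sum.inr (Sum.inl j)) (Sum.inr (Sum.inl j')))
  iseqv := by
    constructor
    · intro p
      rcases p with i | (i | (j | k))
      · exact Or.inl ⟨Sum.inl i, Sum.inl i, rfl, rfl, (GOS τ ι).iseqv.refl _⟩
      · exact Or.inl ⟨Sum.inr (Sum.inl i), Sum.inr (Sum.inl i), rfl, rfl, (GOS τ ι).iseqv.refl _⟩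
      · exact Or.inr ⟨j, j, rfl, rfl, (glue n τ ι).iseqv.refl _⟩
      · exact Or.inl ⟨Sum.inr (Sum.inr k), Sum.inr (Sum.inr k), rfl, rfl, (GOS τ ι).iseqv.refl _⟩
    · rintro p q (⟨t, t', hp, hq, h⟩ | ⟨j, j', hp, hq, h⟩)
      · exact Or.inl ⟨t', t, hq, hp, (GOS τ ι).iseqv.symm h⟩
      · exact Or.inr ⟨j', j, hq, hp, (glue n τ ι).iseqv.symm h⟩
    · rintro p q r (⟨t1, t1', h1p, h1q, e1⟩ | ⟨j, j', hp, hq, hg⟩)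
        (⟨t2, t2', h2q, h2r, e2⟩ | ⟨j2, j2', hq2, hr, hg2⟩)
      · exact Or.inl ⟨t1, t2', h1p, h2r,
          (GOS τ ι).iseqv.trans e1 ((GOS τ ι).iseqv.trans (linkK_unique τ ι h1q h2q) e2)⟩
      · subst hq2
        subst hr
        obtain ⟨z, rfl, hz⟩ := h1q
        exact Or.inl ⟨t1, embTop n z, h1p,
          ⟨z, rfl, (glue n τ ι).iseqv.trans ((glue n τ ι).iseqv.symm hg2) hz⟩, e1⟩
      · subst hq
        subst hp
        obtain ⟨z, rfl, hz⟩ := h2q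
        exact Or.inl ⟨embTop n z, t2', ⟨z, rfl, (glue n τ ι).iseqv.trans hg hz⟩, h2r, e2⟩
      · subst hq
        have hjj : j' = j2 := by
          simpa using hq2
        subst hjj
        exact Or.inr ⟨j, j2', hp, hr, (glue n τ ι).iseqv.trans hg hg2⟩

lemma flatR_le_KS : ∀ p q : QV n, FlatR n τ ι p q → (KS τ ι).r p q := by
  rintro p q (⟨a, b, hab, rfl, rfl⟩ | ⟨a, b, hab, rfl, rfl⟩ | ⟨a, b, hab, rfl, rfl⟩)
  · refine Or.inl ⟨embBot n a, embBot n b, ?_, ?_,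
      EqvGen.rel _ _ (Or.inl ⟨a, b, hab, rfl, rfl⟩)⟩
    · cases a <;> rfl
    · cases b <;> rfl
  · rcases a with i | j <;> rcases b with i' | j'
    · exact Or.inl ⟨Sum.inr (Sum.inl i), Sum.inr (Sum.inl i'), rfl, rfl,
        EqvGen.rel _ _ (Or.inr ⟨Sum.inl i, Sum.inl i',
          EqvGen.rel _ _ (Or.inl ⟨Sum.inl i, Sum.inl i', hab, rfl, rfl⟩), rfl, rfl⟩)⟩
    · exact Or.inl ⟨Sum.inr (Sum.inl i), Sum.inr (Sum.inl i), rfl,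
        ⟨Sum.inl i, rfl, (glue n τ ι).iseqv.symm
          (EqvGen.rel _ _ (Or.inl ⟨Sum.inl i, Sum.inr j', hab, rfl, rfl⟩))⟩,
        (GOS τ ι).iseqv.refl _⟩
    · exact Or.inl ⟨Sum.inr (Sum.inl i'), Sum.inr (Sum.inl i'),
        ⟨Sum.inl i', rfl, EqvGen.rel _ _ (Or.inl ⟨Sum.inr j, Sum.inl i', hab, rfl, rfl⟩)⟩,
        rfl, (GOS τ ι).iseqv.refl _⟩
    · exact Or.inr ⟨j, j', rfl, rfl,
        EqvGen.rel _ _ (Or.inl ⟨Sum.inr j, Sum.inr j', hab, rfl, rfl⟩)⟩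
  · rcases a with j | k <;> rcases b with j' | k'
    · exact Or.inr ⟨j, j', rfl, rfl,
        EqvGen.rel _ _ (Or.inr ⟨Sum.inl j, Sum.inl j', hab, rfl, rfl⟩)⟩
    · exact Or.inl ⟨Sum.inr (Sum.inr k'), Sum.inr (Sum.inr k'),
        ⟨Sum.inr k', rfl, EqvGen.rel _ _ (Or.inr ⟨Sum.inl j, Sum.inr k', hab, rfl, rfl⟩)⟩,
        rfl, (GOS τ ι).iseqv.refl _⟩
    · exact Or.inl ⟨Sum.inr (Sum.inr k), Sum.inr (Sum.inr k), rfl,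
        ⟨Sum.inr k, rfl, EqvGen.rel _ _ (Or.inr ⟨Sum.inl j', Sum.inr k,
          τ.iseqv.symm hab, rfl, rfl⟩)⟩, (GOS τ ι).iseqv.refl _⟩
    · exact Or.inl ⟨Sum.inr (Sum.inr k), Sum.inr (Sum.inr k'), rfl, rfl,
        EqvGen.rel _ _ (Or.inr ⟨Sum.inr k, Sum.inr k',
          EqvGen.rel _ _ (Or.inr ⟨Sum.inr k, Sum.inr k', hab, rfl, rfl⟩), rfl, rfl⟩)⟩

lemma flat_to_sigma {x y : DVert n} (h : (FlatS n τ ι).r (oQ x) (oQ y)) :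
    (pcomp n (pcomp n τ ι) (pstar n τ)).r x y := by
  have hk := eqvgen_le' (KS τ ι) (flatR_le_KS τ ι) h
  rcases hk with ⟨t, t', hp, hq, hg⟩ | ⟨j, j', hp, hq, hg⟩
  · have hx : t = embOut n x := by rcases x with i | k <;> exact hp
    have hy : t' = embOut n y := by rcases y with i | k <;> exact hq
    rw [hx, hy] at hg
    exact hg
  · exfalso
    rcases x with i | k <;> simp [oQ] at hp

lemma sigma_iff_flat {x y : DVert n} :
    (pcomp n (pcomp n τ ι) (pstar n τ)).r x y ↔ (FlatS n τ ι).r (oQ x) (oQ y) := by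
  constructor
  · intro h
    have h2 := sigma_to_flat τ ι (x := embOut n x) (y := embOut n y) h
    rwa [gOut_embOut, gOut_embOut] at h2
  · exact flat_to_sigma τ ι

end Assoc
section Counting

variable {n : ℕ} (τ ι : Setoid (DVert n))

def propClasses (σ : Setoid (DVert n)) : Set (Set (DVert n)) :=
  {C ∈ σ.classes | IsPropagating C}

def PhiU (P : Set (DVert n)) : Set (DVert n) :=
  {y | ∃ x ∈ P, (UpS n τ ι).r (uQ y) (e12 x)}

lemma up_cross {i k : Fin n} (h : (UpS n τ ι).r (qv1 i) (qv3 k)) :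
    ∃ x : DVert n, IsPropagating {y | ι.r y x} ∧ (UpS n τ ι).r (qv1 i) (e12 x) := by
  have hgen : ∀ p q, UpR n τ ι p q →
      (Sum.elim (fun _ => false) (Sum.elim (fun _ => false) (fun _ => true)) p =
       Sum.elim (fun _ => false) (Sum.elim (fun _ => false) (fun _ => true)) q) ∨
      (∃ x : DVert n, IsPropagating {y | ι.r y x} ∧ p = e12 x) ∨
      (∃ x : DVert n, IsPropagating {y | ι.r y x} ∧ q = e12 x) := by
    rintro p q (⟨a, b, hab, rfl, rfl⟩ | ⟨a, b, hab, rfl, rfl⟩)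
    · rcases a with i1 | j1 <;> rcases b with i2 | j2
      · exact Or.inl rfl
      · exact Or.inr (Or.inr ⟨Sum.inr j2, ⟨⟨i1, hab⟩, ⟨j2, ι.iseqv.refl _⟩⟩, rfl⟩)
      · exact Or.inr (Or.inl ⟨Sum.inr j1, ⟨⟨i2, ι.iseqv.symm hab⟩, ⟨j1, ι.iseqv.refl _⟩⟩, rfl⟩)
      · exact Or.inl rfl
    · rcases a with j1 | k1 <;> rcases b with j2 | k2 <;> exact Or.inl rfl
  obtain ⟨t, ⟨x, hx, rfl⟩, ht⟩ := eqvgen_cross _ _ hgen h (by simp)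
  exact ⟨x, hx, ht⟩

lemma up_strong (hr : prank n (pcomp n τ ι) = prank n ι) :
    (∀ P ∈ propClasses ι, ∃ k : Fin n, ∃ x ∈ P, (UpS n τ ι).r (e12 x) (qv3 k)) ∧
    (∀ P ∈ propClasses ι, ∀ P' ∈ propClasses ι, ∀ x ∈ P, ∀ x' ∈ P',
      (UpS n τ ι).r (e12 x) (e12 x') → P = P') := by
  have hAB : (propClasses (pcomp n τ ι)).ncard = (propClasses ι).ncard := hr
  have hc1 : ∀ P ∈ propClasses ι, ∀ x ∈ P, ∀ y : DVert n,
      (y ∈ PhiU τ ι P ↔ (UpS n τ ι).r (uQ y) (e12 x)) := by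
    intro P hP x hx y
    constructor
    · rintro ⟨x1, hx1, h⟩
      exact (UpS n τ ι).iseqv.trans h
        (EqvGen.rel _ _ (Or.inl ⟨x1, x, class_rel hP.1 hx1 hx, rfl, rfl⟩))
    · intro h
      exact ⟨x, hx, h⟩
  have hPhiEq : ∀ P ∈ propClasses ι, ∀ i : Fin n, Sum.inl i ∈ P →
      PhiU τ ι P = {y | (pcomp n τ ι).r y (Sum.inl i)} := by
    intro P hP i hi
    ext y
    exact (hc1 P hP (Sum.inl i) hi y).trans
      (pcomp_iff_up τ ι (x := y) (y := Sum.inl i)).symm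
  have hsurj : ∀ C ∈ propClasses (pcomp n τ ι), ∃ P ∈ propClasses ι, PhiU τ ι P = C := by
    intro C hC
    obtain ⟨i, hi⟩ := hC.2.1
    obtain ⟨k, hk⟩ := hC.2.2
    have hik : (pcomp n τ ι).r (Sum.inl i) (Sum.inr k) := class_rel hC.1 hi hk
    have hup : (UpS n τ ι).r (qv1 i) (qv3 k) := (pcomp_iff_up τ ι).mp hik
    obtain ⟨x, hxprop, hreach⟩ := up_cross τ ι hup
    refine ⟨{y | ι.r y x}, ⟨Setoid.mem_classes ι x, hxprop⟩, ?_⟩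
    obtain ⟨z, rfl⟩ := hC.1
    ext y
    constructor
    · rintro ⟨x1, hx1, h⟩
      have h2 : (UpS n τ ι).r (uQ y) (e12 x) :=
        (UpS n τ ι).iseqv.trans h (EqvGen.rel _ _ (Or.inl ⟨x1, x, hx1, rfl, rfl⟩))
      have h3 : (UpS n τ ι).r (uQ y) (uQ (Sum.inl i)) :=
        (UpS n τ ι).iseqv.trans h2 ((UpS n τ ι).iseqv.symm hreach)
      exact (pcomp n τ ι).iseqv.trans ((pcomp_iff_up τ ι).mpr h3) hi
    · intro hy
      have h1 : (pcomp n τ ι).r y (Sum.inl i) :=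
        (pcomp n τ ι).iseqv.trans hy ((pcomp n τ ι).iseqv.symm hi)
      have h2 : (UpS n τ ι).r (uQ y) (qv1 i) := (pcomp_iff_up τ ι).mp h1
      exact ⟨x, ι.iseqv.refl x, (UpS n τ ι).iseqv.trans h2 hreach⟩
  have hBsub : propClasses (pcomp n τ ι) ⊆
      PhiU τ ι '' {P ∈ propClasses ι | IsPropagating (PhiU τ ι P)} := by
    intro C hC
    obtain ⟨P, hPA, hPC⟩ := hsurj C hC
    exact ⟨P, ⟨hPA, by rw [hPC]; exact hC.2⟩, hPC⟩
  have h1 : (propClasses (pcomp n τ ι)).ncard ≤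
      {P ∈ propClasses ι | IsPropagating (PhiU τ ι P)}.ncard :=
    le_trans (Set.ncard_le_ncard hBsub (Set.toFinite _)) (Set.ncard_image_le (Set.toFinite _))
  have hA'A : {P ∈ propClasses ι | IsPropagating (PhiU τ ι P)} = propClasses ι :=
    Set.eq_of_subset_of_ncard_le (fun P hP => hP.1) (hAB ▸ h1) (Set.toFinite _)
  have hPhiProp : ∀ P ∈ propClasses ι, IsPropagating (PhiU τ ι P) := by
    intro P hP
    have : P ∈ {P ∈ propClasses ι | IsPropagating (PhiU τ ι P)} := hA'A.symm ▸ hP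
    exact this.2
  constructor
  · intro P hP
    obtain ⟨k, hk⟩ := (hPhiProp P hP).2
    obtain ⟨x, hx, h⟩ := hk
    exact ⟨k, x, hx, (UpS n τ ι).iseqv.symm h⟩
  · intro P hP P' hP' x hx x' hx' hUp
    have hPhiEq2 : PhiU τ ι P = PhiU τ ι P' := by
      ext y
      rw [hc1 P hP x hx y, hc1 P' hP' x' hx' y]
      constructor
      · intro h
        exact (UpS n τ ι).iseqv.trans h hUp
      · intro h
        exact (UpS n τ ι).iseqv.trans h ((UpS n τ ι).iseqv.symm hUp)
    have hmap : ∀ P, P ∈ propClasses ι → PhiU τ ι P ∈ propClasses (pcomp n τ ι) := by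
      intro P hP
      obtain ⟨i, hi⟩ := hP.2.1
      refine ⟨?_, hPhiProp P hP⟩
      rw [hPhiEq P hP i hi]
      exact Setoid.mem_classes _ _
    exact Set.inj_on_of_surj_on_of_ncard_le (s := propClasses ι)
      (t := propClasses (pcomp n τ ι)) (fun P _ => PhiU τ ι P)
      (fun P hP => hmap P hP)
      (fun C hC => by
        obtain ⟨P, hPA, h⟩ := hsurj C hC
        exact ⟨P, hPA, h⟩) hAB.ge hP hP' hPhiEq2 (Set.toFinite _)

end Counting
section DownFacts

variable {n : ℕ} (τ ι : Setoid (DVert n))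

lemma iota_swap' (hι : pstar n ι = ι) {a b : DVert n} (h : ι.r a b) :
    ι.r a.swap b.swap := (iota_swap ι hι a b).mpr h

lemma swap_class (hι : pstar n ι = ι) {P : Set (DVert n)} (hP : P ∈ ι.classes) :
    Sum.swap '' P ∈ ι.classes := by
  obtain ⟨z, rfl⟩ := hP
  refine ⟨z.swap, ?_⟩
  ext w
  simp only [Set.mem_image, Set.mem_setOf_eq]
  constructor
  · rintro ⟨v, hv, rfl⟩
    exact iota_swap' ι hι hv
  · intro h
    refine ⟨w.swap, ?_, Sum.swap_swap w⟩
    have h2 := iota_swap' ι hι h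
    rwa [Sum.swap_swap] at h2

lemma swap_prop {P : Set (DVert n)} (h : IsPropagating P) :
    IsPropagating (Sum.swap '' P) := by
  obtain ⟨⟨i, hi⟩, ⟨k, hk⟩⟩ := h
  exact ⟨⟨k, ⟨Sum.inr k, hk, rfl⟩⟩, ⟨i, ⟨Sum.inl i, hi, rfl⟩⟩⟩

lemma swap_image_inj {P P' : Set (DVert n)} (h : Sum.swap '' P = Sum.swap '' P') :
    P = P' := by
  have hinj : Function.Injective (Sum.swap : DVert n → DVert n) := fun a b hab => by
    rw [← Sum.swap_swap a, hab, Sum.swap_swap]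
  exact Set.image_injective.mpr hinj h

lemma swap_mem_propClasses (hι : pstar n ι = ι) {P : Set (DVert n)}
    (hP : P ∈ propClasses ι) : Sum.swap '' P ∈ propClasses ι :=
  ⟨swap_class ι hι hP.1, swap_prop hP.2⟩

lemma down_strong (hι : pstar n ι = ι) (hr : prank n (pcomp n τ ι) = prank n ι) :
    (∀ P ∈ propClasses ι, ∃ i : Fin n, ∃ x ∈ P, (DownS n τ ι).r (e12 x) (qv0 i)) ∧
    (∀ P ∈ propClasses ι, ∀ P' ∈ propClasses ι, ∀ x ∈ P, ∀ x' ∈ P',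
      (DownS n τ ι).r (e12 x) (e12 x') → P = P') := by
  constructor
  · intro P hP
    obtain ⟨k, xt, hxt, h⟩ := (up_strong τ ι hr).1 _ (swap_mem_propClasses ι hι hP)
    obtain ⟨x, hx, rfl⟩ := hxt
    refine ⟨k, x, hx, (down_iff_up τ ι hι).mpr ?_⟩
    rw [flipQ_e12]
    exact h
  · intro P hP P' hP' x hx x' hx' hDown
    have hup := (down_iff_up τ ι hι).mp hDown
    rw [flipQ_e12, flipQ_e12] at hup
    exact swap_image_inj ((up_strong τ ι hr).2 _ (swap_mem_propClasses ι hι hP)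
      _ (swap_mem_propClasses ι hι hP') x.swap (Set.mem_image_of_mem _ hx)
      x'.swap (Set.mem_image_of_mem _ hx') hup)

lemma trap_up {i : Fin n} (hnp : ¬ IsPropagating {y | ι.r y (Sum.inl i)}) :
    ∀ {z}, (UpS n τ ι).r (qv1 i) z →
      ∃ i', z = qv1 i' ∧ ι.r (Sum.inl i') (Sum.inl i) := by
  intro z h
  have hinv := eqvgen_inv (r := UpR n τ ι)
    {p : QV n | ∃ i', p = qv1 i' ∧ ι.r (Sum.inl i') (Sum.inl i)} ?_ h
  · exact hinv.mp ⟨i, rfl, ι.iseqv.refl _⟩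
  rintro p q (⟨a, b, hab, rfl, rfl⟩ | ⟨a, b, hab, rfl, rfl⟩)
  · rcases a with i1 | j1 <;> rcases b with i2 | j2
    · constructor
      · rintro ⟨i', he, hrel⟩
        obtain rfl : i1 = i' := by simpa using he
        exact ⟨i2, rfl, ι.iseqv.trans (ι.iseqv.symm hab) hrel⟩
      · rintro ⟨i', he, hrel⟩
        obtain rfl : i2 = i' := by simpa using he
        exact ⟨i1, rfl, ι.iseqv.trans hab hrel⟩
    · constructor
      · rintro ⟨i', he, hrel⟩
        obtain rfl : i1 = i' := by simpa using he
        exact absurd ⟨⟨i, ι.iseqv.refl _⟩,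
          ⟨j2, ι.iseqv.trans (ι.iseqv.symm hab) hrel⟩⟩ hnp
      · rintro ⟨i', he, _⟩
        exact absurd he (by simp)
    · constructor
      · rintro ⟨i', he, _⟩
        exact absurd he (by simp)
      · rintro ⟨i', he, hrel⟩
        obtain rfl : i2 = i' := by simpa using he
        exact absurd ⟨⟨i, ι.iseqv.refl _⟩,
          ⟨j1, ι.iseqv.trans hab hrel⟩⟩ hnp
    · constructor <;>
        · rintro ⟨i', he, _⟩
          exact absurd he (by simp)
  · rcases a with j1 | k1 <;> rcases b with j2 | k2 <;>
      constructor <;>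
      · rintro ⟨i', he, _⟩
        exact absurd he (by simp)

lemma trap_down {j : Fin n} (hnp : ¬ IsPropagating {y | ι.r y (Sum.inr j)}) :
    ∀ {z}, (DownS n τ ι).r (qv2 j) z →
      ∃ j', z = qv2 j' ∧ ι.r (Sum.inr j') (Sum.inr j) := by
  intro z h
  have hinv := eqvgen_inv (r := DownR n τ ι)
    {p : QV n | ∃ j', p = qv2 j' ∧ ι.r (Sum.inr j') (Sum.inr j)} ?_ h
  · exact hinv.mp ⟨j, rfl, ι.iseqv.refl _⟩
  rintro p q (⟨a, b, hab, rfl, rfl⟩ | ⟨a, b, hab, rfl, rfl⟩)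
  · rcases a with i1 | j1 <;> rcases b with i2 | j2 <;>
      constructor <;>
      · rintro ⟨j', he, _⟩
        exact absurd he (by simp)
  · rcases a with i1 | j1 <;> rcases b with i2 | j2
    · constructor <;>
        · rintro ⟨j', he, _⟩
          exact absurd he (by simp)
    · constructor
      · rintro ⟨j', he, _⟩
        exact absurd he (by simp)
      · rintro ⟨j', he, hrel⟩
        obtain rfl : j2 = j' := by simpa using he
        exact absurd ⟨⟨i1, ι.iseqv.trans hab hrel⟩, ⟨j, ι.iseqv.refl _⟩⟩ hnp
    · constructor
      · rintro ⟨j', he, hrel⟩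
        obtain rfl : j1 = j' := by simpa using he
        exact absurd ⟨⟨i2, ι.iseqv.trans (ι.iseqv.symm hab) hrel⟩,
          ⟨j, ι.iseqv.refl _⟩⟩ hnp
      · rintro ⟨j', he, _⟩
        exact absurd he (by simp)
    · constructor
      · rintro ⟨j', he, hrel⟩
        obtain rfl : j1 = j' := by simpa using he
        exact ⟨j2, rfl, ι.iseqv.trans (ι.iseqv.symm hab) hrel⟩
      · rintro ⟨j', he, hrel⟩
        obtain rfl : j2 = j' := by simpa using he
        exact ⟨j1, rfl, ι.iseqv.trans hab hrel⟩

lemma upS_q0 {i : Fin n} {z : QV n} (h : (UpS n τ ι).r (qv0 i) z) : z = qv0 i := by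
  have hinv := eqvgen_inv (r := UpR n τ ι) {p : QV n | p = qv0 i} ?_ h
  · exact (hinv.mp rfl).symm ▸ rfl
  rintro p q (⟨a, b, hab, rfl, rfl⟩ | ⟨a, b, hab, rfl, rfl⟩) <;>
    rcases a with a1 | a2 <;> rcases b with b1 | b2 <;>
    constructor <;>
    · intro he
      exact absurd he (by simp)

lemma downS_q3 {k : Fin n} {z : QV n} (h : (DownS n τ ι).r (qv3 k) z) : z = qv3 k := by
  have hinv := eqvgen_inv (r := DownR n τ ι) {p : QV n | p = qv3 k} ?_ h
  · exact (hinv.mp rfl).symm ▸ rfl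
  rintro p q (⟨a, b, hab, rfl, rfl⟩ | ⟨a, b, hab, rfl, rfl⟩) <;>
    rcases a with a1 | a2 <;> rcases b with b1 | b2 <;>
    constructor <;>
    · intro he
      exact absurd he (by simp)

end DownFacts
section Separation

variable {n : ℕ} (τ ι : Setoid (DVert n))

def UpTo (p : QV n) (P : Set (DVert n)) : Prop := ∃ x ∈ P, (UpS n τ ι).r p (e12 x)
def DownTo (p : QV n) (P : Set (DVert n)) : Prop := ∃ x ∈ P, (DownS n τ ι).r p (e12 x)

lemma flatR_symm {p q : QV n} (h : FlatR n τ ι p q) : FlatR n τ ι q p := by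
  rcases h with ⟨a, b, hab, rfl, rfl⟩ | ⟨a, b, hab, rfl, rfl⟩ | ⟨a, b, hab, rfl, rfl⟩
  · exact Or.inl ⟨b, a, (pstar n τ).iseqv.symm hab, rfl, rfl⟩
  · exact Or.inr (Or.inl ⟨b, a, ι.iseqv.symm hab, rfl, rfl⟩)
  · exact Or.inr (Or.inr ⟨b, a, τ.iseqv.symm hab, rfl, rfl⟩)

lemma flat_sep (hι : pstar n ι = ι) (hr : prank n (pcomp n τ ι) = prank n ι) :
    ∀ P ∈ propClasses ι, ∀ P' ∈ propClasses ι, ∀ x ∈ P, ∀ x' ∈ P',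
      (FlatS n τ ι).r (e12 x) (e12 x') → P = P' := by
  have hU := up_strong τ ι hr
  have hD := down_strong τ ι hι hr
  have htrans : ∀ p q, FlatR n τ ι p q → ∀ P ∈ propClasses ι,
      (UpTo τ ι p P ∨ DownTo τ ι p P) → (UpTo τ ι q P ∨ DownTo τ ι q P) := by
    rintro p q (⟨a, b, hab, rfl, rfl⟩ | ⟨a, b, hab, rfl, rfl⟩ | ⟨a, b, hab, rfl, rfl⟩)
      P hP hpre
    · -- bottom edge
      rcases hpre with ⟨x, hx, hux⟩ | ⟨x, hx, hdx⟩
      · rcases a with i | i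
        · exact absurd (upS_q0 τ ι hux) (by rcases x with x1 | x2 <;> simp)
        · by_cases hQ : IsPropagating {y | ι.r y (Sum.inl i)}
          · have hPQ : P = {y | ι.r y (Sum.inl i)} := by
              refine hU.2 P hP _ ⟨Setoid.mem_classes _ _, hQ⟩ x hx
                (Sum.inl i) (ι.iseqv.refl _) ?_
              exact (UpS n τ ι).iseqv.symm hux
            have hPi : Sum.inl i ∈ P := by rw [hPQ]; exact ι.iseqv.refl _
            right
            exact ⟨Sum.inl i, hPi,
              EqvGen.rel _ _ (Or.inl ⟨b, Sum.inr i, (pstar n τ).iseqv.symm hab, rfl, rfl⟩)⟩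
          · obtain ⟨i', hz, hrel⟩ := trap_up τ ι hQ hux
            rcases x with x1 | x2
            · obtain rfl : x1 = i' := by simpa using hz
              exfalso
              apply hQ
              have hPi : Sum.inl i ∈ P := class_mem hP.1 hx (ι.iseqv.symm hrel)
              have hPQ : P = {y | ι.r y (Sum.inl i)} :=
                Setoid.eq_of_mem_classes hP.1 hPi (Setoid.mem_classes ι _) (ι.iseqv.refl _)
              rw [← hPQ]
              exact hP.2
            · exact absurd hz (by simp)
      · right
        exact ⟨x, hx, (DownS n τ ι).iseqv.trans
          (EqvGen.rel _ _ (Or.inl ⟨b, a, (pstar n τ).iseqv.symm hab, rfl, rfl⟩)) hdx⟩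
    · -- middle edge
      rcases hpre with ⟨x, hx, hux⟩ | ⟨x, hx, hdx⟩
      · left
        exact ⟨x, hx, (UpS n τ ι).iseqv.trans
          (EqvGen.rel _ _ (Or.inl ⟨b, a, ι.iseqv.symm hab, rfl, rfl⟩)) hux⟩
      · right
        exact ⟨x, hx, (DownS n τ ι).iseqv.trans
          (EqvGen.rel _ _ (Or.inr ⟨b, a, ι.iseqv.symm hab, rfl, rfl⟩)) hdx⟩
    · -- top edge
      rcases hpre with ⟨x, hx, hux⟩ | ⟨x, hx, hdx⟩
      · left
        exact ⟨x, hx, (UpS n τ ι).iseqv.trans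
          (EqvGen.rel _ _ (Or.inr ⟨b, a, τ.iseqv.symm hab, rfl, rfl⟩)) hux⟩
      · rcases a with j | k
        · by_cases hQ : IsPropagating {y | ι.r y (Sum.inr j)}
          · have hPQ : P = {y | ι.r y (Sum.inr j)} := by
              refine hD.2 P hP _ ⟨Setoid.mem_classes _ _, hQ⟩ x hx
                (Sum.inr j) (ι.iseqv.refl _) ?_
              exact (DownS n τ ι).iseqv.symm hdx
            have hPj : Sum.inr j ∈ P := by rw [hPQ]; exact ι.iseqv.refl _
            left
            exact ⟨Sum.inr j, hPj,
              EqvGen.rel _ _ (Or.inr ⟨b, Sum.inl j, τ.iseqv.symm hab, rfl, rfl⟩)⟩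
          · obtain ⟨j', hz, hrel⟩ := trap_down τ ι hQ hdx
            rcases x with x1 | x2
            · exact absurd hz (by simp)
            · obtain rfl : x2 = j' := by simpa using hz
              exfalso
              apply hQ
              have hPj : Sum.inr j ∈ P := class_mem hP.1 hx (ι.iseqv.symm hrel)
              have hPQ : P = {y | ι.r y (Sum.inr j)} :=
                Setoid.eq_of_mem_classes hP.1 hPj (Setoid.mem_classes ι _) (ι.iseqv.refl _)
              rw [← hPQ]
              exact hP.2
        · exact absurd (downS_q3 τ ι hdx) (by rcases x with x1 | x2 <;> simp)
  set W : Setoid (QV n) := ⟨fun p q => (FlatS n τ ι).r p q ∧ ∀ P ∈ propClasses ι,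
      ((UpTo τ ι p P ∨ DownTo τ ι p P) ↔ (UpTo τ ι q P ∨ DownTo τ ι q P)),
    ⟨fun p => ⟨(FlatS n τ ι).iseqv.refl p, fun _ _ => Iff.rfl⟩,
     fun h => ⟨(FlatS n τ ι).iseqv.symm h.1, fun P hP => (h.2 P hP).symm⟩,
     fun h1 h2 => ⟨(FlatS n τ ι).iseqv.trans h1.1 h2.1,
       fun P hP => (h1.2 P hP).trans (h2.2 P hP)⟩⟩⟩ with hW
  intro P hP P' hP' x hx x' hx' hflat
  have hWr := eqvgen_le' W (fun p q hpq => ⟨EqvGen.rel _ _ hpq,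
    fun P hP => ⟨htrans p q hpq P hP, htrans q p (flatR_symm τ ι hpq) P hP⟩⟩) hflat
  have hcase := (hWr.2 P hP).mp (Or.inl ⟨x, hx, (UpS n τ ι).iseqv.refl _⟩)
  rcases hcase with ⟨x1, hx1, h⟩ | ⟨x1, hx1, h⟩
  · exact (hU.2 P' hP' P hP x' hx' x1 hx1 h).symm
  · exact (hD.2 P' hP' P hP x' hx' x1 hx1 h).symm

lemma flat_cross {i k : Fin n} (h : (FlatS n τ ι).r (qv0 i) (qv3 k)) :
    ∃ x : DVert n, IsPropagating {y | ι.r y x} ∧ (FlatS n τ ι).r (qv0 i) (e12 x) := by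
  have hgen : ∀ p q, FlatR n τ ι p q →
      (Sum.elim (fun _ => false) (Sum.elim (fun _ => false) (fun _ => true)) p =
       Sum.elim (fun _ => false) (Sum.elim (fun _ => false) (fun _ => true)) q) ∨
      (∃ x : DVert n, IsPropagating {y | ι.r y x} ∧ p = e12 x) ∨
      (∃ x : DVert n, IsPropagating {y | ι.r y x} ∧ q = e12 x) := by
    rintro p q (⟨a, b, hab, rfl, rfl⟩ | ⟨a, b, hab, rfl, rfl⟩ | ⟨a, b, hab, rfl, rfl⟩)
    · rcases a with i1 | j1 <;> rcases b with i2 | j2 <;> exact Or.inl rfl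
    · rcases a with i1 | j1 <;> rcases b with i2 | j2
      · exact Or.inl rfl
      · exact Or.inr (Or.inr ⟨Sum.inr j2, ⟨⟨i1, hab⟩, ⟨j2, ι.iseqv.refl _⟩⟩, rfl⟩)
      · exact Or.inr (Or.inl ⟨Sum.inr j1, ⟨⟨i2, ι.iseqv.symm hab⟩, ⟨j1, ι.iseqv.refl _⟩⟩, rfl⟩)
      · exact Or.inl rfl
    · rcases a with j1 | k1 <;> rcases b with j2 | k2 <;> exact Or.inl rfl
  obtain ⟨t, ⟨x, hx, rfl⟩, ht⟩ := eqvgen_cross _ _ hgen h (by simp)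
  exact ⟨x, hx, ht⟩

end Separation
section Psi

variable {n : ℕ} (τ ι : Setoid (DVert n))

def PsiF (P : Set (DVert n)) : Set (DVert n) :=
  {y | ∃ x ∈ P, (FlatS n τ ι).r (oQ y) (e12 x)}

lemma psi_mem_iff {P : Set (DVert n)} (hP : P ∈ propClasses ι) {x : DVert n} (hx : x ∈ P)
    (y : DVert n) : y ∈ PsiF τ ι P ↔ (FlatS n τ ι).r (oQ y) (e12 x) := by
  constructor
  · rintro ⟨x1, hx1, h⟩
    exact (FlatS n τ ι).iseqv.trans h
      (EqvGen.rel _ _ (Or.inr (Or.inl ⟨x1, x, class_rel hP.1 hx1 hx, rfl, rfl⟩)))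
  · intro h
    exact ⟨x, hx, h⟩

lemma psi_class (hι : pstar n ι = ι) (hr : prank n (pcomp n τ ι) = prank n ι)
    {P : Set (DVert n)} (hP : P ∈ propClasses ι) :
    PsiF τ ι P ∈ propClasses (pcomp n (pcomp n τ ι) (pstar n τ)) := by
  obtain ⟨k, x0, hx0, hupk⟩ := (up_strong τ ι hr).1 P hP
  have hflatk : (FlatS n τ ι).r (e12 x0) (qv3 k) := up_le_flat τ ι hupk
  have heq : PsiF τ ι P = {y | (pcomp n (pcomp n τ ι) (pstar n τ)).r y (Sum.inr k)} := by
    ext y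
    rw [psi_mem_iff τ ι hP hx0 y]
    constructor
    · intro h
      exact (sigma_iff_flat τ ι (x := y) (y := Sum.inr k)).mpr
        ((FlatS n τ ι).iseqv.trans h hflatk)
    · intro h
      exact (FlatS n τ ι).iseqv.trans
        ((sigma_iff_flat τ ι (x := y) (y := Sum.inr k)).mp h)
        ((FlatS n τ ι).iseqv.symm hflatk)
  refine ⟨by rw [heq]; exact Setoid.mem_classes _ _, ?_, ?_⟩
  · obtain ⟨i, x1, hx1, hdowni⟩ := (down_strong τ ι hι hr).1 P hP
    exact ⟨i, x1, hx1, (FlatS n τ ι).iseqv.symm (down_le_flat τ ι hdowni)⟩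
  · exact ⟨k, x0, hx0, (FlatS n τ ι).iseqv.symm hflatk⟩

lemma psi_surj (hι : pstar n ι = ι) (hr : prank n (pcomp n τ ι) = prank n ι) :
    propClasses (pcomp n (pcomp n τ ι) (pstar n τ)) ⊆ PsiF τ ι '' propClasses ι := by
  intro C hC
  obtain ⟨i, hi⟩ := hC.2.1
  obtain ⟨k, hk⟩ := hC.2.2
  have h1 : (pcomp n (pcomp n τ ι) (pstar n τ)).r (Sum.inl i) (Sum.inr k) :=
    class_rel hC.1 hi hk
  have h2 : (FlatS n τ ι).r (qv0 i) (qv3 k) :=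
    (sigma_iff_flat τ ι (x := Sum.inl i) (y := Sum.inr k)).mp h1
  obtain ⟨x, hxprop, hreach⟩ := flat_cross τ ι h2
  refine ⟨{y | ι.r y x}, ⟨Setoid.mem_classes ι x, hxprop⟩, ?_⟩
  obtain ⟨z, rfl⟩ := hC.1
  ext y
  constructor
  · rintro ⟨x1, hx1, h⟩
    have h3 : (FlatS n τ ι).r (oQ y) (e12 x) :=
      (FlatS n τ ι).iseqv.trans h (EqvGen.rel _ _ (Or.inr (Or.inl ⟨x1, x, hx1, rfl, rfl⟩)))
    have h4 : (FlatS n τ ι).r (oQ y) (qv0 i) :=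
      (FlatS n τ ι).iseqv.trans h3 ((FlatS n τ ι).iseqv.symm hreach)
    exact (pcomp n (pcomp n τ ι) (pstar n τ)).iseqv.trans
      ((sigma_iff_flat τ ι (x := y) (y := Sum.inl i)).mpr h4) hi
  · intro hy
    have h3 : (pcomp n (pcomp n τ ι) (pstar n τ)).r y (Sum.inl i) :=
      (pcomp n (pcomp n τ ι) (pstar n τ)).iseqv.trans hy
        ((pcomp n (pcomp n τ ι) (pstar n τ)).iseqv.symm hi)
    have h4 : (FlatS n τ ι).r (oQ y) (qv0 i) :=
      (sigma_iff_flat τ ι (x := y) (y := Sum.inl i)).mp h3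
    exact ⟨x, ι.iseqv.refl x, (FlatS n τ ι).iseqv.trans h4 hreach⟩

lemma psi_injOn (hι : pstar n ι = ι) (hr : prank n (pcomp n τ ι) = prank n ι) :
    Set.InjOn (PsiF τ ι) (propClasses ι) := by
  intro P hP P' hP' he
  obtain ⟨⟨i, hi⟩, -⟩ := (psi_class τ ι hι hr hP).2
  have hi' : Sum.inl i ∈ PsiF τ ι P' := he ▸ hi
  obtain ⟨x, hx, h1⟩ := hi
  obtain ⟨x', hx', h2⟩ := hi'
  exact flat_sep τ ι hι hr P hP P' hP' x hx x' hx'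
    ((FlatS n τ ι).iseqv.trans ((FlatS n τ ι).iseqv.symm h1) h2)

end Psi
end ConjAux

/-- if `ι` is `⋆`-self-dual and `r(τ∘ι) = r(ι)`, then `τ∘ι∘τ⋆` is again
`⋆`-self-dual of rank `r(ι)`. -/
theorem conjugate_selfdual (n : ℕ) (τ ι : Setoid (DVert n))
    (hι : pstar n ι = ι) (hr : prank n (pcomp n τ ι) = prank n ι) :
    pstar n (pcomp n (pcomp n τ ι) (pstar n τ)) = pcomp n (pcomp n τ ι) (pstar n τ) ∧
      prank n (pcomp n (pcomp n τ ι) (pstar n τ)) = prank n ι := by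
  constructor
  · apply Setoid.ext
    intro x y
    show (pcomp n (pcomp n τ ι) (pstar n τ)).r x.swap y.swap ↔
      (pcomp n (pcomp n τ ι) (pstar n τ)).r x y
    have h1 := ConjAux.sigma_iff_flat τ ι (x := x.swap) (y := y.swap)
    have h2 := ConjAux.sigma_iff_flat τ ι (x := x) (y := y)
    have h3 : (ConjAux.FlatS n τ ι).r (ConjAux.oQ x.swap) (ConjAux.oQ y.swap) ↔
        (ConjAux.FlatS n τ ι).r (ConjAux.oQ x) (ConjAux.oQ y) := by
      rw [← ConjAux.flipQ_oQ, ← ConjAux.flipQ_oQ]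
      exact (ConjAux.flat_flip τ ι hι).symm
    exact h1.trans (h3.trans h2.symm)
  · have hset : ConjAux.propClasses (pcomp n (pcomp n τ ι) (pstar n τ)) =
        ConjAux.PsiF τ ι '' ConjAux.propClasses ι := by
      apply Set.Subset.antisymm (ConjAux.psi_surj τ ι hι hr)
      rintro C ⟨P, hP, rfl⟩
      exact ConjAux.psi_class τ ι hι hr hP
    have h1 : prank n (pcomp n (pcomp n τ ι) (pstar n τ)) =
        (ConjAux.propClasses (pcomp n (pcomp n τ ι) (pstar n τ))).ncard := rfl
    have h2 : prank n ι = (ConjAux.propClasses ι).ncard := rfl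
    rw [h1, h2, hset, Set.ncard_image_of_injOn (ConjAux.psi_injOn τ ι hι hr)]

end
end
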